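/- arXiv:0910.5765 — 6 statements merged into one kernel-verified Lean document; each statement's English description precedes it below -/
import Mathlib

section
/- For every real number α > −1, the integral ∫_{−1}^{1} arcsin(t) · t · (1 − t²)^α dt equals Γ(1/2)·Γ(α + 3/2) / ((2α + 2)·Γ(α + 2)). -/
open MeasureTheory Real Set Filter Topology intervalIntegral

lemma int_one_sub_sq {s : ℝ} (hs : -1 < s) :
    IntervalIntegrable (fun t : ℝ => (1 - t ^ 2) ^ s) volume (-1) 1 := by
  have hIcc : IntegrableOn (fun t : ℝ => (1 - t ^ 2) ^ s) (Icc (-1) 1) volume := by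
    have h1 : IntegrableOn (fun t : ℝ => (1 - t) ^ s) (Icc (0:ℝ) 1) volume := by
      rw [integrableOn_Icc_iff_integrableOn_Ioo]
      have := (intervalIntegrable_rpow' (a := 0) (b := 1) hs).comp_sub_left 1
      simp only [sub_zero, sub_self] at this
      exact (intervalIntegrable_iff_integrableOn_Ioo_of_le (by norm_num)).mp this.symm
    have h2 : IntegrableOn (fun t : ℝ => (1 + t) ^ s) (Icc (-1:ℝ) 0) volume := by
      rw [integrableOn_Icc_iff_integrableOn_Ioo]
      have := (intervalIntegrable_rpow' (a := 0) (b := 1) hs).comp_add_right 1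
      simp only [zero_sub, sub_self] at this
      have h' := (intervalIntegrable_iff_integrableOn_Ioo_of_le (a := -1) (b := 0) (by norm_num)).mp this
      refine h'.congr_fun (fun x _ => by ring_nf) measurableSet_Ioo
    have hA : IntegrableOn (fun t : ℝ => (1 - t ^ 2) ^ s) (Icc (0:ℝ) 1) volume := by
      have hc : ContinuousOn (fun t : ℝ => (1 + t) ^ s) (Icc (0:ℝ) 1) :=
        ContinuousOn.rpow_const (by fun_prop) (fun x hx => Or.inl (by nlinarith [hx.1]))
      have := h1.continuousOn_mul hc isCompact_Icc
      refine this.congr_fun (fun x hx => ?_) measurableSet_Icc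
      dsimp only
      rw [← Real.mul_rpow (by nlinarith [hx.1, hx.2]) (by nlinarith [hx.2])]
      ring_nf
    have hB : IntegrableOn (fun t : ℝ => (1 - t ^ 2) ^ s) (Icc (-1:ℝ) 0) volume := by
      have hc : ContinuousOn (fun t : ℝ => (1 - t) ^ s) (Icc (-1:ℝ) 0) :=
        ContinuousOn.rpow_const (by fun_prop) (fun x hx => Or.inl (by nlinarith [hx.2]))
      have := h2.continuousOn_mul hc isCompact_Icc
      refine this.congr_fun (fun x hx => ?_) measurableSet_Icc
      dsimp only
      rw [← Real.mul_rpow (by nlinarith [hx.2]) (by nlinarith [hx.1])]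
      ring_nf
    have := hB.union hA
    rwa [Set.Icc_union_Icc_eq_Icc (by norm_num) (by norm_num)] at this
  have : IntegrableOn (fun t : ℝ => (1 - t ^ 2) ^ s) (uIcc (-1) 1) volume := by
    rwa [uIcc_of_le (by norm_num)]
  exact this.intervalIntegrable
lemma beta_half {s : ℝ} (hs : -1 < s) :
    ∫ x in (0:ℝ)..1, x ^ (-(1/2) : ℝ) * (1 - x) ^ s =
      Real.Gamma (1/2) * Real.Gamma (s+1) / Real.Gamma (s + 3/2) := by
  have h10 : (0:ℝ) < 1/2 := by norm_num
  have hs1 : (0:ℝ) < s + 1 := by linarith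
  have key := Complex.Gamma_mul_Gamma_eq_betaIntegral (s := (1/2 : ℂ)) (t := ((s:ℝ) + 1 : ℂ))
      (by simp [h10]) (by simp; linarith)
  have hbeta : Complex.betaIntegral (1/2) ((s:ℝ) + 1) =
      ((∫ x in (0:ℝ)..1, x ^ (-(1/2) : ℝ) * (1 - x) ^ s : ℝ) : ℂ) := by
    rw [Complex.betaIntegral, ← intervalIntegral.integral_ofReal]
    refine intervalIntegral.integral_congr (fun x hx => ?_)
    rw [uIcc_of_le (by norm_num)] at hx
    rw [Complex.ofReal_mul, Complex.ofReal_cpow hx.1, Complex.ofReal_cpow (by linarith [hx.2])]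
    push_cast
    norm_num
  rw [hbeta] at key
  have h32 : ((1:ℂ)/2 + ((s:ℝ)+1)) = ((s + 3/2 : ℝ) : ℂ) := by push_cast; ring
  rw [h32] at key
  have hG : Real.Gamma (s + 3/2) ≠ 0 := (Real.Gamma_pos_of_pos (by linarith)).ne'
  have : ((Real.Gamma (1/2) * Real.Gamma (s+1) : ℝ) : ℂ) =
      ((Real.Gamma (s + 3/2) * ∫ x in (0:ℝ)..1, x ^ (-(1/2) : ℝ) * (1 - x) ^ s : ℝ) : ℂ) := by
    push_cast
    rw [← Complex.Gamma_ofReal, ← Complex.Gamma_ofReal, ← Complex.Gamma_ofReal] at *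
    push_cast at key ⊢
    convert key using 2 <;> push_cast <;> ring
  have hr := Complex.ofReal_inj.mp this
  rw [eq_div_iff hG]
  linarith [hr]
lemma sq_image : (fun t : ℝ => t ^ 2) '' Ioo 0 1 = Ioo 0 1 := by
  ext x
  constructor
  · rintro ⟨t, ⟨h1, h2⟩, rfl⟩
    exact ⟨by positivity, by simp only []; nlinarith⟩
  · rintro ⟨h1, h2⟩
    exact ⟨Real.sqrt x, ⟨Real.sqrt_pos.mpr h1, by
      rw [show (1:ℝ) = Real.sqrt 1 by simp]; exact Real.sqrt_lt_sqrt h1.le h2⟩,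
      Real.sq_sqrt h1.le⟩

lemma half_integral {s : ℝ} (hs : -1 < s) :
    ∫ t in (0:ℝ)..1, (1 - t ^ 2) ^ s =
      (1/2) * ∫ x in (0:ℝ)..1, x ^ (-(1/2) : ℝ) * (1 - x) ^ s := by
  have hinj : InjOn (fun t : ℝ => t ^ 2) (Ioo 0 1) := by
    intro a ha b hb h
    simp only at h
    nlinarith [ha.1, hb.1]
  have hderiv : ∀ t ∈ Ioo (0:ℝ) 1, HasDerivWithinAt (fun t : ℝ => t ^ 2) (2 * t) (Ioo 0 1) t := by
    intro t _
    simpa using (hasDerivAt_pow 2 t).hasDerivWithinAt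
  have key := integral_image_eq_integral_abs_deriv_smul measurableSet_Ioo hderiv hinj
      (fun x => x ^ (-(1/2) : ℝ) * (1 - x) ^ s)
  rw [sq_image] at key
  have hRHS : ∫ t in Ioo (0:ℝ) 1, |2 * t| • ((t ^ 2) ^ (-(1/2) : ℝ) * (1 - t ^ 2) ^ s)
      = ∫ t in Ioo (0:ℝ) 1, 2 * (1 - t ^ 2) ^ s := by
    refine setIntegral_congr_fun measurableSet_Ioo (fun t ht => ?_)
    have ht0 : (0:ℝ) < t := ht.1
    have h1 : ((t:ℝ) ^ 2) ^ (-(1/2) : ℝ) = t⁻¹ := by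
      rw [← Real.rpow_natCast t 2, ← Real.rpow_mul ht0.le]
      norm_num
      exact Real.rpow_neg_one t
    rw [h1, abs_of_pos (by linarith), smul_eq_mul]
    field_simp
  rw [hRHS] at key
  rw [intervalIntegral.integral_of_le (by norm_num : (0:ℝ) ≤ 1),
      intervalIntegral.integral_of_le (by norm_num : (0:ℝ) ≤ 1),
      MeasureTheory.integral_Ioc_eq_integral_Ioo,
      MeasureTheory.integral_Ioc_eq_integral_Ioo, key,
      MeasureTheory.integral_const_mul]
  ring
lemma full_integral {s : ℝ} (hs : -1 < s) :
    ∫ t in (-1:ℝ)..1, (1 - t ^ 2) ^ s =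
      Real.Gamma (1/2) * Real.Gamma (s+1) / Real.Gamma (s + 3/2) := by
  have hI := int_one_sub_sq hs
  have h1 : IntervalIntegrable (fun t : ℝ => (1 - t ^ 2) ^ s) volume (-1) 0 :=
    hI.mono_set (by rw [uIcc_of_le (by norm_num : (-1:ℝ) ≤ 0), uIcc_of_le (by norm_num : (-1:ℝ) ≤ 1)]; exact Icc_subset_Icc le_rfl (by norm_num))
  have h2 : IntervalIntegrable (fun t : ℝ => (1 - t ^ 2) ^ s) volume 0 1 :=
    hI.mono_set (by rw [uIcc_of_le (by norm_num : (0:ℝ) ≤ 1), uIcc_of_le (by norm_num : (-1:ℝ) ≤ 1)]; exact Icc_subset_Icc (by norm_num) le_rfl)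
  have hsplit := intervalIntegral.integral_add_adjacent_intervals h1 h2
  have heven : ∫ t in (-1:ℝ)..0, (1 - t ^ 2) ^ s = ∫ t in (0:ℝ)..1, (1 - t ^ 2) ^ s := by
    have := intervalIntegral.integral_comp_neg (a := 0) (b := 1)
        (fun t : ℝ => (1 - t ^ 2) ^ s)
    simp only [neg_sq, neg_zero, neg_neg] at this
    exact this.symm
  rw [← hsplit, heven, half_integral hs, ← beta_half hs]
  ring
lemma ibp (α : ℝ) (hα : -1 < α) :
    ∫ t in (-1:ℝ)..1, Real.arcsin t * t * (1 - t ^ 2) ^ α =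
      (∫ t in (-1:ℝ)..1, (1 - t ^ 2) ^ (α + 1/2)) / (2 * α + 2) := by
  have hα2 : (0:ℝ) < 2 * α + 2 := by linarith
  have hs' : (-1:ℝ) < α + 1/2 := by linarith
  set F : ℝ → ℝ := fun t => Real.arcsin t * (-(1 - t ^ 2) ^ (α + 1) / (2 * α + 2)) with hF
  set G : ℝ → ℝ := fun t =>
    Real.arcsin t * t * (1 - t ^ 2) ^ α - (1 - t ^ 2) ^ (α + 1/2) / (2 * α + 2) with hG
  -- derivative
  have hder : ∀ t ∈ Ioo (-1:ℝ) 1, HasDerivAt F (G t) t := by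
    intro t ht
    have h0 : (0:ℝ) < 1 - t ^ 2 := by nlinarith [ht.1, ht.2]
    have hu := Real.hasDerivAt_arcsin (by linarith [ht.1] : t ≠ -1) (ht.2.ne)
    have hv0 : HasDerivAt (fun t : ℝ => 1 - t ^ 2) (-(2 * t)) t := by
      simpa using ((hasDerivAt_pow 2 t).const_sub 1)
    have hv1 := hv0.rpow_const (p := α + 1) (Or.inl h0.ne')
    have hv : HasDerivAt (fun t : ℝ => -(1 - t ^ 2) ^ (α + 1) / (2 * α + 2))
        (-(-(2 * t) * (α + 1) * (1 - t ^ 2) ^ (α + 1 - 1)) / (2 * α + 2)) t :=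
      hv1.neg.div_const _
    have hmul := hu.mul hv
    refine hmul.congr_deriv ?_
    have hsq : Real.sqrt (1 - t ^ 2) = (1 - t ^ 2) ^ ((1:ℝ)/2) := Real.rpow_natCast .. ▸
      (Real.sqrt_eq_rpow _)
    have hsqpos : (0:ℝ) < (1 - t ^ 2) ^ ((1:ℝ)/2) := Real.rpow_pos_of_pos h0 _
    have e1 : (1 - t ^ 2) ^ (α + 1) = (1 - t ^ 2) ^ (α + 1/2) * (1 - t ^ 2) ^ ((1:ℝ)/2) := by
      rw [← Real.rpow_add h0]; ring_nf
    have e2 : (1 - t ^ 2) ^ (α + 1 - 1) = (1 - t ^ 2) ^ α := by norm_num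
    simp only [hG, hsq, e1, e2]
    have hα1 : (1 + α) ≠ 0 := (by linarith : (0:ℝ) < 1 + α).ne'
    field_simp
    ring_nf
    field_simp
    ring
  -- integrability
  have hg : IntervalIntegrable (fun t : ℝ => Real.arcsin t * t * (1 - t ^ 2) ^ α)
      volume (-1) 1 := by
    rw [intervalIntegrable_iff] at *
    have hbase := intervalIntegrable_iff.mp (int_one_sub_sq hα)
    have hmeas : AEStronglyMeasurable (fun t : ℝ => Real.arcsin t * t)
        (volume.restrict (Set.uIoc (-1:ℝ) 1)) :=
      (Real.continuous_arcsin.mul continuous_id).aestronglyMeasurable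
    have hbound : ∀ᵐ x ∂(volume.restrict (Set.uIoc (-1:ℝ) 1)),
        ‖Real.arcsin x * x‖ ≤ π/2 := by
      filter_upwards [ae_restrict_mem measurableSet_uIoc] with x hx
      rw [Set.uIoc_of_le (by norm_num : (-1:ℝ) ≤ 1)] at hx
      rw [norm_mul, Real.norm_eq_abs, Real.norm_eq_abs]
      have h1 : |Real.arcsin x| ≤ π/2 := by
        rw [abs_le]; exact ⟨Real.neg_pi_div_two_le_arcsin x, Real.arcsin_le_pi_div_two x⟩
      have h2 : |x| ≤ 1 := by rw [abs_le]; exact ⟨hx.1.le, hx.2⟩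
      calc |Real.arcsin x| * |x| ≤ (π/2) * 1 :=
            mul_le_mul h1 h2 (abs_nonneg _) (by positivity)
        _ = π/2 := by ring
    have := hbase.bdd_mul hmeas hbound
    exact this.congr (Filter.Eventually.of_forall (fun x => by ring))
  have hGint : IntervalIntegrable G volume (-1) 1 :=
    hg.sub ((int_one_sub_sq hs').div_const _)
  -- limits at endpoints
  have hend : ∀ c : ℝ, c = 1 ∨ c = -1 → Tendsto F (𝓝 c) (𝓝 0) := by
    intro c hc
    have hc2 : 1 - c ^ 2 = 0 := by rcases hc with rfl | rfl <;> ring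
    have hcont : ContinuousAt F c := by
      refine Real.continuous_arcsin.continuousAt.mul (ContinuousAt.div_const ?_ _)
      refine ContinuousAt.neg (ContinuousAt.rpow_const (by fun_prop) (Or.inr (by linarith)))
    have hF0 : F c = 0 := by
      simp only [hF, hc2, Real.zero_rpow (by linarith : α + 1 ≠ 0)]
      ring
    simpa [hF0] using hcont.tendsto
  have hta : Tendsto F (𝓝[>] (-1:ℝ)) (𝓝 0) :=
    (hend (-1) (Or.inr rfl)).mono_left nhdsWithin_le_nhds
  have htb : Tendsto F (𝓝[<] (1:ℝ)) (𝓝 0) :=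
    (hend 1 (Or.inl rfl)).mono_left nhdsWithin_le_nhds
  have key := intervalIntegral.integral_eq_sub_of_hasDerivAt_of_tendsto
    (by norm_num : (-1:ℝ) < 1) hder hGint hta htb
  rw [sub_zero] at key
  have hsplit : ∫ t in (-1:ℝ)..1, G t =
      (∫ t in (-1:ℝ)..1, Real.arcsin t * t * (1 - t ^ 2) ^ α) -
      (∫ t in (-1:ℝ)..1, (1 - t ^ 2) ^ (α + 1/2)) / (2 * α + 2) := by
    rw [hG, intervalIntegral.integral_sub hg ((int_one_sub_sq hs').div_const _),
      intervalIntegral.integral_div]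
  rw [hsplit] at key
  linarith [key]

theorem stmt5 (α : ℝ) (hα : -1 < α) :
    ∫ t in (-1 : ℝ)..1, Real.arcsin t * t * (1 - t ^ 2) ^ α =
      Real.Gamma (1 / 2) * Real.Gamma (α + 3 / 2) /
        ((2 * α + 2) * Real.Gamma (α + 2)) := by
  have hs' : (-1:ℝ) < α + 1/2 := by linarith
  rw [ibp α hα, full_integral hs']
  have e1 : α + 1/2 + 1 = α + 3/2 := by ring
  have e2 : α + 1/2 + 3/2 = α + 2 := by ring
  rw [e1, e2]
  have hG : Real.Gamma (α + 2) ≠ 0 := (Real.Gamma_pos_of_pos (by linarith)).ne'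
  have h2 : (2 * α + 2 : ℝ) ≠ 0 := by linarith
  rw [div_div, mul_comm (Real.Gamma (α + 2))]
end

section
/- Let m ≥ 2 be an integer and set α = (m − 3)/2. Then the quotient of the two integrals (∫_{−1}^{1} arcsin(t) · t · (1 − t²)^α dt) / (∫_{−1}^{1} t² · (1 − t²)^α dt) equals 1/γ(m) = (m/2)·(Γ(m/2)/Γ((m+1)/2))². -/
open Real MeasureTheory intervalIntegral Set

/-- `gam m = (2/m) * (Γ((m+1)/2) / Γ(m/2))²`. -/
noncomputable def gam (n : ℕ) : ℝ :=
  2 / (n : ℝ) * (Real.Gamma (((n : ℝ) + 1) / 2) / Real.Gamma ((n : ℝ) / 2)) ^ 2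

/-- The weight `(1-t²)^(-1/2)` is interval integrable on `[0,1]`. -/
lemma w_int_right : IntervalIntegrable (fun t : ℝ => (1 - t ^ 2) ^ (-(1/2) : ℝ)) volume 0 1 := by
  have hg : IntervalIntegrable (fun t : ℝ => (1 - t) ^ (-(1/2) : ℝ)) volume 0 1 := by
    have := (intervalIntegrable_rpow' (a := 0) (b := 1) (r := -(1/2))
      (by norm_num)).comp_sub_left 1
    simpa using this.symm
  apply hg.mono_fun
  · apply Measurable.aestronglyMeasurable
    exact ((measurable_const.sub (measurable_id.pow_const 2)).pow measurable_const)
  · filter_upwards [ae_restrict_mem measurableSet_uIoc] with t ht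
    rw [uIoc_of_le (by norm_num : (0:ℝ) ≤ 1)] at ht
    have h1 : (0:ℝ) ≤ 1 - t ^ 2 := by nlinarith [ht.1, ht.2]
    have h2 : (0:ℝ) ≤ 1 - t := by nlinarith [ht.2]
    rw [Real.norm_eq_abs, Real.norm_eq_abs, abs_of_nonneg (Real.rpow_nonneg h1 _),
      abs_of_nonneg (Real.rpow_nonneg h2 _)]
    rcases eq_or_lt_of_le ht.2 with h | h
    · subst h
      norm_num
    · exact Real.rpow_le_rpow_of_nonpos (by nlinarith) (by nlinarith [ht.1.le]) (by norm_num)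

/-- The weight `(1-t²)^(-1/2)` is interval integrable on `[-1,1]`. -/
lemma w_int : IntervalIntegrable (fun t : ℝ => (1 - t ^ 2) ^ (-(1/2) : ℝ)) volume (-1) 1 := by
  have hl : IntervalIntegrable (fun t : ℝ => (1 - t ^ 2) ^ (-(1/2) : ℝ)) volume (-1) 0 := by
    have := (IntervalIntegrable.iff_comp_neg (by simp)).mp w_int_right
    simpa [neg_sq] using this.symm
  exact hl.trans w_int_right

/-- Integrability of `g t * (1-t²)^β` for bounded measurable `g` and `β ≥ -1/2`. -/
lemma int_aux {β : ℝ} (hβ : -(1/2) ≤ β) {g : ℝ → ℝ} (hg : Measurable g)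
    (hgb : ∀ t ∈ Icc (-1:ℝ) 1, |g t| ≤ 2) :
    IntervalIntegrable (fun t => g t * (1 - t ^ 2) ^ β) volume (-1) 1 := by
  have hw : IntervalIntegrable (fun t : ℝ => 2 * (1 - t ^ 2) ^ (-(1/2) : ℝ)) volume (-1) 1 :=
    w_int.const_mul 2
  apply hw.mono_fun
  · exact (hg.mul ((measurable_const.sub (measurable_id.pow_const 2)).pow
      measurable_const)).aestronglyMeasurable
  · have h1 : ∀ᵐ t : ℝ ∂(volume.restrict (Set.uIoc (-1:ℝ) 1)), t ≠ 1 := by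
      refine Filter.Eventually.filter_mono (MeasureTheory.ae_mono Measure.restrict_le_self) ?_
      refine MeasureTheory.ae_iff.mpr ?_
      simpa using measure_singleton (1:ℝ)
    filter_upwards [ae_restrict_mem measurableSet_uIoc, h1] with t ht hne
    rw [uIoc_of_le (by norm_num : (-1:ℝ) ≤ 1)] at ht
    have ht1 : t < 1 := lt_of_le_of_ne ht.2 hne
    have hx0 : (0:ℝ) < 1 - t ^ 2 := by nlinarith [ht.1]
    have hx1 : 1 - t ^ 2 ≤ 1 := by nlinarith
    have hb : (1 - t ^ 2) ^ β ≤ (1 - t ^ 2) ^ (-(1/2) : ℝ) :=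
      Real.rpow_le_rpow_of_exponent_ge hx0 hx1 hβ
    rw [Real.norm_eq_abs, Real.norm_eq_abs, abs_mul,
      abs_of_nonneg (Real.rpow_nonneg hx0.le _)]
    have hgt := hgb t ⟨ht.1.le, ht.2⟩
    have hnn : (0:ℝ) ≤ (1 - t ^ 2) ^ β := Real.rpow_nonneg hx0.le _
    calc |g t| * (1 - t ^ 2) ^ β ≤ 2 * (1 - t ^ 2) ^ β := by
          exact mul_le_mul_of_nonneg_right hgt hnn
      _ ≤ 2 * (1 - t ^ 2) ^ (-(1/2) : ℝ) := by nlinarith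
      _ ≤ |2 * (1 - t ^ 2) ^ (-(1/2) : ℝ)| := le_abs_self _

lemma int_pure {β : ℝ} (hβ : -(1/2) ≤ β) :
    IntervalIntegrable (fun t : ℝ => (1 - t ^ 2) ^ β) volume (-1) 1 := by
  have := int_aux hβ (g := fun _ => 1) measurable_const (by intro t _; norm_num)
  simpa using this

lemma hasDeriv_aux (c : ℝ) {t : ℝ} (ht : t ∈ Ioo (-1:ℝ) 1) :
    HasDerivAt (fun t : ℝ => (1 - t ^ 2) ^ c)
      (-(2 * t) * c * (1 - t ^ 2) ^ (c - 1)) t := by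
  have h0 : (0:ℝ) < 1 - t ^ 2 := by nlinarith [ht.1, ht.2]
  have h : HasDerivAt (fun t : ℝ => 1 - t ^ 2) (-(2 * t)) t := by
    simpa using (hasDerivAt_pow 2 t).const_sub 1
  exact h.rpow_const (Or.inl h0.ne')

lemma keyA {c : ℝ} (hc : 1/2 ≤ c) :
    ∫ t in (-1:ℝ)..1, t ^ 2 * (1 - t ^ 2) ^ (c - 1) =
      (∫ t in (-1:ℝ)..1, (1 - t ^ 2) ^ c) / (2 * c) := by
  have hc0 : (0:ℝ) < c := by linarith
  set F : ℝ → ℝ := fun t => -(t * (1 - t ^ 2) ^ c) / (2 * c) with hF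
  set f' : ℝ → ℝ := fun t => t ^ 2 * (1 - t ^ 2) ^ (c - 1) - (1 - t ^ 2) ^ c / (2 * c) with hf'
  have hint1 : IntervalIntegrable (fun t : ℝ => t ^ 2 * (1 - t ^ 2) ^ (c - 1)) volume (-1) 1 :=
    int_aux (by linarith) (measurable_id.pow_const 2)
      (by intro t ht; rw [abs_of_nonneg (sq_nonneg t)]; nlinarith [ht.1, ht.2])
  have hint2 : IntervalIntegrable (fun t : ℝ => (1 - t ^ 2) ^ c / (2 * c)) volume (-1) 1 :=
    (int_pure (by linarith)).div_const _
  have hderiv : ∀ t ∈ Ioo (-1:ℝ) 1, HasDerivAt F (f' t) t := by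
    intro t ht
    have h := ((hasDerivAt_id t).mul (hasDeriv_aux c ht)).neg.div_const (2 * c)
    refine h.congr_deriv (Eq.symm ?_)
    simp only [hf', id_eq]
    field_simp
    ring
  have hcont : ContinuousOn F (Icc (-1:ℝ) 1) := by
    apply Continuous.continuousOn
    exact ((continuous_id.mul ((continuous_const.sub (continuous_pow 2)).rpow_const
      (fun x => Or.inr (by linarith)))).neg.div_const _)
  have hFTC := intervalIntegral.integral_eq_sub_of_hasDerivAt_of_le (by norm_num : (-1:ℝ) ≤ 1)
    hcont hderiv (hint1.sub hint2)
  have hF1 : F 1 = 0 := by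
    simp [hF, Real.zero_rpow hc0.ne']
  have hFm1 : F (-1) = 0 := by
    simp [hF, Real.zero_rpow hc0.ne']
  rw [hf'] at hFTC
  rw [intervalIntegral.integral_sub hint1 hint2, hF1, hFm1, sub_zero,
    intervalIntegral.integral_div] at hFTC
  linarith [hFTC]

lemma keyB {c : ℝ} (hc : 1/2 ≤ c) :
    ∫ t in (-1:ℝ)..1, Real.arcsin t * t * (1 - t ^ 2) ^ (c - 1) =
      (∫ t in (-1:ℝ)..1, (1 - t ^ 2) ^ (c - 1/2)) / (2 * c) := by
  have hc0 : (0:ℝ) < c := by linarith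
  set F : ℝ → ℝ := fun t => -(Real.arcsin t * (1 - t ^ 2) ^ c) / (2 * c) with hF
  set f' : ℝ → ℝ := fun t =>
    Real.arcsin t * t * (1 - t ^ 2) ^ (c - 1) - (1 - t ^ 2) ^ (c - 1/2) / (2 * c) with hf'
  have hint1 : IntervalIntegrable (fun t : ℝ => Real.arcsin t * t * (1 - t ^ 2) ^ (c - 1))
      volume (-1) 1 := by
    have := int_aux (β := c - 1) (by linarith)
      (g := fun t => Real.arcsin t * t)
      ((Real.continuous_arcsin.measurable).mul measurable_id)
      (by
        intro t ht
        rw [abs_mul]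
        have h1 : |Real.arcsin t| ≤ π / 2 := by
          rw [abs_le]
          exact ⟨Real.neg_pi_div_two_le_arcsin t, Real.arcsin_le_pi_div_two t⟩
        have h2 : |t| ≤ 1 := abs_le.mpr ⟨ht.1, ht.2⟩
        nlinarith [Real.pi_le_four, abs_nonneg (Real.arcsin t), abs_nonneg t])
    simpa [mul_assoc] using this
  have hint2 : IntervalIntegrable (fun t : ℝ => (1 - t ^ 2) ^ (c - 1/2) / (2 * c))
      volume (-1) 1 := (int_pure (by linarith)).div_const _
  have hderiv : ∀ t ∈ Ioo (-1:ℝ) 1, HasDerivAt F (f' t) t := by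
    intro t ht
    have h0 : (0:ℝ) < 1 - t ^ 2 := by nlinarith [ht.1, ht.2]
    have harc : HasDerivAt Real.arcsin (1 / Real.sqrt (1 - t ^ 2)) t :=
      Real.hasDerivAt_arcsin (by intro h; rw [h] at ht; exact lt_irrefl _ ht.1)
        (by intro h; rw [h] at ht; exact lt_irrefl _ ht.2)
    have h := (harc.mul (hasDeriv_aux c ht)).neg.div_const (2 * c)
    refine h.congr_deriv (Eq.symm ?_)
    have e1 : (1:ℝ) / Real.sqrt (1 - t ^ 2) * (1 - t ^ 2) ^ c = (1 - t ^ 2) ^ (c - 1/2) := by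
      rw [Real.sqrt_eq_rpow, Real.rpow_sub h0]
      ring
    simp only [hf']
    rw [← e1]
    field_simp
    ring
  have hcont : ContinuousOn F (Icc (-1:ℝ) 1) := by
    apply Continuous.continuousOn
    exact ((Real.continuous_arcsin.mul ((continuous_const.sub (continuous_pow 2)).rpow_const
      (fun x => Or.inr (by linarith)))).neg.div_const _)
  have hFTC := intervalIntegral.integral_eq_sub_of_hasDerivAt_of_le (by norm_num : (-1:ℝ) ≤ 1)
    hcont hderiv (hint1.sub hint2)
  have hF1 : F 1 = 0 := by
    simp [hF, Real.zero_rpow hc0.ne']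
  have hFm1 : F (-1) = 0 := by
    simp [hF, Real.zero_rpow hc0.ne']
  rw [hf'] at hFTC
  rw [intervalIntegral.integral_sub hint1 hint2, hF1, hFm1, sub_zero,
    intervalIntegral.integral_div] at hFTC
  linarith [hFTC]

/-- `J k = ∫ (1-t²)^(k/2)`. -/
noncomputable def Jint (k : ℕ) : ℝ := ∫ t in (-1:ℝ)..1, (1 - t ^ 2) ^ ((k : ℝ) / 2)

lemma Jrec (k : ℕ) : Jint k = (((k:ℝ) + 3) / ((k:ℝ) + 2)) * Jint (k + 2) := by
  have hk0 : (0:ℝ) ≤ (k:ℝ) := k.cast_nonneg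
  have hA := keyA (c := ((k:ℝ) + 2) / 2) (by linarith)
  have he1 : ((k:ℝ) + 2) / 2 - 1 = (k:ℝ) / 2 := by ring
  have he2 : (((k + 2 : ℕ) : ℝ)) / 2 = ((k:ℝ) + 2) / 2 := by push_cast; ring
  rw [he1] at hA
  have hsplit : Jint k = Jint (k + 2) + ∫ t in (-1:ℝ)..1, t ^ 2 * (1 - t ^ 2) ^ ((k:ℝ) / 2) := by
    have hi1 : IntervalIntegrable (fun t : ℝ => (1 - t ^ 2) ^ (((k + 2 : ℕ) : ℝ) / 2))
        volume (-1) 1 := int_pure (by rw [he2]; linarith)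
    have hi2 : IntervalIntegrable (fun t : ℝ => t ^ 2 * (1 - t ^ 2) ^ ((k:ℝ) / 2))
        volume (-1) 1 :=
      int_aux (by linarith) (measurable_id.pow_const 2)
        (by intro t ht; rw [abs_of_nonneg (sq_nonneg t)]; nlinarith [ht.1, ht.2])
    rw [Jint, Jint, ← intervalIntegral.integral_add hi1 hi2]
    apply intervalIntegral.integral_congr
    intro t ht
    rw [uIcc_of_le (by norm_num : (-1:ℝ) ≤ 1)] at ht
    show (1 - t ^ 2) ^ ((k:ℝ) / 2) =
      (1 - t ^ 2) ^ (((k + 2 : ℕ) : ℝ) / 2) + t ^ 2 * (1 - t ^ 2) ^ ((k:ℝ) / 2)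
    have hx : (0:ℝ) ≤ 1 - t ^ 2 := by nlinarith [ht.1, ht.2]
    rcases eq_or_lt_of_le hx with h | h
    · have ht2 : t ^ 2 = 1 := by nlinarith
      have h0 : (1:ℝ) - t ^ 2 = 0 := h.symm
      rcases Nat.eq_zero_or_pos k with hk | hk
      · subst hk
        rw [h0]
        norm_num
        linarith [ht2]
      · have hk2 : ((k:ℝ)) / 2 ≠ 0 := ne_of_gt (div_pos (Nat.cast_pos.mpr hk) two_pos)
        have hk3 : (((k + 2 : ℕ) : ℝ)) / 2 ≠ 0 := by
          rw [he2]; positivity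
        rw [h0, Real.zero_rpow hk2, Real.zero_rpow hk3]
        ring
    · rw [he2, show ((k:ℝ) + 2) / 2 = (k:ℝ) / 2 + 1 by ring, Real.rpow_add_one h.ne']
      nlinarith [Real.rpow_nonneg hx ((k:ℝ)/2)]
  have h2c : ((k:ℝ) + 2) ≠ 0 := by positivity
  have hJ2 : (∫ t in (-1:ℝ)..1, t ^ 2 * (1 - t ^ 2) ^ ((k:ℝ) / 2)) =
      Jint (k + 2) / ((k:ℝ) + 2) := by
    rw [hA, Jint, he2]
    congr 1
    ring
  rw [hJ2] at hsplit
  rw [hsplit]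
  field_simp
  ring

lemma Jgamma (k : ℕ) :
    Jint k * Real.Gamma (((k:ℝ) + 3) / 2) = Real.sqrt π * Real.Gamma (((k:ℝ) + 2) / 2) := by
  induction k using Nat.twoStepInduction with
  | zero =>
    have hJ0 : Jint 0 = 2 := by
      simp [Jint]
      norm_num
    have hG : Real.Gamma (3 / 2 : ℝ) = Real.sqrt π / 2 := by
      have : (3/2 : ℝ) = 1/2 + 1 := by norm_num
      rw [this, Real.Gamma_add_one (by norm_num), Real.Gamma_one_half_eq]
      ring
    rw [hJ0]
    norm_num
    rw [hG]
    ring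
  | one =>
    have hJ1 : Jint 1 = π / 2 := by
      rw [Jint]
      rw [show (∫ t in (-1:ℝ)..1, (1 - t ^ 2) ^ (((1:ℕ):ℝ) / 2)) =
          ∫ t in (-1:ℝ)..1, Real.sqrt (1 - t ^ 2) from by
        apply intervalIntegral.integral_congr
        intro t _
        show (1 - t ^ 2) ^ (((1:ℕ):ℝ) / 2) = Real.sqrt (1 - t ^ 2)
        rw [Real.sqrt_eq_rpow]
        norm_num]
      exact integral_sqrt_one_sub_sq
    have hG : Real.Gamma ((3:ℝ) / 2) = Real.sqrt π / 2 := by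
      have : (3/2 : ℝ) = 1/2 + 1 := by norm_num
      rw [this, Real.Gamma_add_one (by norm_num), Real.Gamma_one_half_eq]
      ring
    rw [hJ1]
    norm_num
    rw [hG]
    nlinarith [Real.mul_self_sqrt Real.pi_pos.le]
  | more k ih _ =>
    have hk0 : (0:ℝ) ≤ (k:ℝ) := k.cast_nonneg
    have hc2 : ((k:ℝ) + 2) ≠ 0 := by linarith
    have hc3 : ((k:ℝ) + 3) ≠ 0 := by linarith
    have hrec2 : ((k:ℝ) + 2) * Jint k = ((k:ℝ) + 3) * Jint (k + 2) := by
      rw [Jrec k]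
      field_simp
    have hpush : ((k + 2 : ℕ) : ℝ) = (k:ℝ) + 2 := by push_cast; ring
    rw [hpush]
    have hG5 : Real.Gamma (((k:ℝ) + 2 + 3) / 2) =
        (((k:ℝ) + 3) / 2) * Real.Gamma (((k:ℝ) + 3) / 2) := by
      rw [show ((k:ℝ) + 2 + 3) / 2 = ((k:ℝ) + 3) / 2 + 1 by ring,
        Real.Gamma_add_one (by positivity)]
    have hG4 : Real.Gamma (((k:ℝ) + 2 + 2) / 2) =
        (((k:ℝ) + 2) / 2) * Real.Gamma (((k:ℝ) + 2) / 2) := by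
      rw [show ((k:ℝ) + 2 + 2) / 2 = ((k:ℝ) + 2) / 2 + 1 by ring,
        Real.Gamma_add_one (by positivity)]
    rw [hG5, hG4]
    have hne : ((k:ℝ) + 2) * 2 ≠ 0 := by positivity
    apply mul_left_cancel₀ hne
    linear_combination (-((k:ℝ) + 2)) * Real.Gamma (((k:ℝ) + 3) / 2) * hrec2 +
      (((k:ℝ) + 2) * ((k:ℝ) + 2)) * ih

lemma Jpos (k : ℕ) : 0 < Jint k := by
  have h := Jgamma k
  have h3 : (0:ℝ) < Real.Gamma (((k:ℝ) + 3) / 2) := Real.Gamma_pos_of_pos (by positivity)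
  have h2 : (0:ℝ) < Real.Gamma (((k:ℝ) + 2) / 2) := Real.Gamma_pos_of_pos (by positivity)
  have hs : (0:ℝ) < Real.sqrt π := Real.sqrt_pos.mpr Real.pi_pos
  nlinarith

theorem stmt7 (m : ℕ) (hm : 2 ≤ m) :
    (∫ t in (-1 : ℝ)..1, Real.arcsin t * t * (1 - t ^ 2) ^ (((m : ℝ) - 3) / 2)) /
      (∫ t in (-1 : ℝ)..1, t ^ 2 * (1 - t ^ 2) ^ (((m : ℝ) - 3) / 2)) =
      1 / gam m := by
  obtain ⟨k, rfl⟩ : ∃ k, m = k + 2 := ⟨m - 2, by omega⟩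
  have hk0 : (0:ℝ) ≤ (k:ℝ) := k.cast_nonneg
  have hc : (1:ℝ)/2 ≤ ((k:ℝ) + 1) / 2 := by linarith
  have he : (((k + 2 : ℕ) : ℝ) - 3) / 2 = ((k:ℝ) + 1) / 2 - 1 := by push_cast; ring
  rw [he, keyB hc, keyA hc]
  have heB : ((k:ℝ) + 1) / 2 - 1/2 = ((k:ℕ):ℝ) / 2 := by push_cast; ring
  have heA : ((k:ℝ) + 1) / 2 = (((k + 1 : ℕ)):ℝ) / 2 := by push_cast; ring
  rw [heB, heA]
  have jk : (∫ t in (-1:ℝ)..1, (1 - t ^ 2) ^ (((k:ℕ):ℝ) / 2)) = Jint k := rfl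
  have jk1 : (∫ t in (-1:ℝ)..1, (1 - t ^ 2) ^ ((((k + 1 : ℕ)):ℝ) / 2)) = Jint (k + 1) := rfl
  rw [jk, jk1]
  have hG2 : (0:ℝ) < Real.Gamma (((k:ℝ) + 2) / 2) := Real.Gamma_pos_of_pos (by positivity)
  have hG3 : (0:ℝ) < Real.Gamma (((k:ℝ) + 3) / 2) := Real.Gamma_pos_of_pos (by positivity)
  have hs : (0:ℝ) < Real.sqrt π := Real.sqrt_pos.mpr Real.pi_pos
  have hq1 := Jgamma k
  have hq2 := Jgamma (k + 1)
  have hpush1 : ((k + 1 : ℕ) : ℝ) = (k:ℝ) + 1 := by push_cast; ring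
  rw [hpush1] at hq2
  have e1 : ((k:ℝ) + 1 + 3) / 2 = ((k:ℝ) + 2) / 2 + 1 := by ring
  have e2 : ((k:ℝ) + 1 + 2) / 2 = ((k:ℝ) + 3) / 2 := by ring
  rw [e1, e2, Real.Gamma_add_one (by positivity : ((k:ℝ) + 2) / 2 ≠ 0)] at hq2
  have hJ1pos := Jpos (k + 1)
  have hJ0pos := Jpos k
  have hJk : Jint k = Real.sqrt π * Real.Gamma (((k:ℝ) + 2) / 2) /
      Real.Gamma (((k:ℝ) + 3) / 2) := by
    rw [eq_div_iff hG3.ne']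
    exact hq1
  have hJk1 : Jint (k + 1) = Real.sqrt π * Real.Gamma (((k:ℝ) + 3) / 2) /
      (((k:ℝ) + 2) / 2 * Real.Gamma (((k:ℝ) + 2) / 2)) := by
    rw [eq_div_iff (by positivity)]
    exact hq2
  have hgam : gam (k + 2) = 2 / ((k:ℝ) + 2) *
      (Real.Gamma (((k:ℝ) + 3) / 2) / Real.Gamma (((k:ℝ) + 2) / 2)) ^ 2 := by
    rw [gam]
    push_cast
    ring_nf
  rw [hgam, hJk, hJk1, hpush1]
  have hk1 : ((k:ℝ) + 1) ≠ 0 := by linarith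
  have hk2 : ((k:ℝ) + 2) ≠ 0 := by linarith
  field_simp
end

section
/- Let n and m be positive integers, and let u, v, u', v' be unit vectors in ℝ^m with u · v = u' · v'. Let X be an n×m random matrix whose entries are independent standard normal random variables, and define E_n(u, v) = E[ ((X u)/‖X u‖) · ((X v)/‖X v‖) ]. Then E_n(u, v) = E_n(u', v'), i.e., E_n(u,v) depends only on the inner product u · v. -/
open scoped BigOperators
open MeasureTheory ProbabilityTheory

/-- The law of an `n × m` random matrix with independent standard normal entries. -/
noncomputable def gaussNM (n m : ℕ) : Measure (Fin n → Fin m → ℝ) :=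
  Measure.pi fun _ => Measure.pi fun _ => gaussianReal 0 1

/-- Matrix-vector multiplication `X u`. -/
noncomputable def nmul {n m : ℕ} (X : Fin n → Fin m → ℝ) (u : Fin m → ℝ) : Fin n → ℝ :=
  fun k => ∑ l, X k l * u l

/-- Euclidean norm of a vector in `ℝ^n`. -/
noncomputable def nnorm {n : ℕ} (v : Fin n → ℝ) : ℝ :=
  Real.sqrt (∑ k, v k ^ 2)

/-- `En n m u v = E[ (Xu/‖Xu‖) · (Xv/‖Xv‖) ]` for a random `n × m` matrix `X`
with independent standard normal entries. -/
noncomputable def En (n m : ℕ) (u v : Fin m → ℝ) : ℝ :=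
  ∫ X, (∑ k, (nmul X u k / nnorm (nmul X u)) * (nmul X v k / nnorm (nmul X v)))
    ∂(gaussNM n m)

open scoped ENNReal NNReal RealInnerProductSpace

lemma lintegral_pi_prod {n : ℕ} {E : Fin n → Type*} [∀ i, MeasurableSpace (E i)]
    (μ : ∀ i, Measure (E i)) [∀ i, SigmaFinite (μ i)] (f : ∀ i, E i → ℝ≥0∞)
    (hf : ∀ i, Measurable (f i)) :
    ∫⁻ x, ∏ i, f i (x i) ∂Measure.pi μ = ∏ i, ∫⁻ y, f i y ∂μ i := by
  induction n with
  | zero => simp [Measure.pi_empty_univ]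
  | succ n ih =>
    have hmp := (MeasureTheory.measurePreserving_piFinSuccAbove μ 0).symm
    have hmeas : Measurable fun x : ∀ j, E j => ∏ i, f i (x i) :=
      Finset.measurable_prod _ fun i _ => (hf i).comp (measurable_pi_apply i)
    rw [← hmp.lintegral_comp hmeas]
    have : ∀ p : E 0 × (∀ j, E (Fin.succAbove 0 j)),
        (∏ i, f i (((MeasurableEquiv.piFinSuccAbove E 0).symm p) i))
          = f 0 p.1 * ∏ j, f (Fin.succ j) (p.2 j) := by
      intro p
      rw [Fin.prod_univ_succ]
      simp [MeasurableEquiv.piFinSuccAbove, Fin.insertNthEquiv, Fin.insertNth_zero]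
      rfl
    simp_rw [this]
    change ∫⁻ p : E 0 × (∀ j : Fin n, E (Fin.succ j)), f 0 p.1 * ∏ j, f (Fin.succ j) (p.2 j)
      ∂((μ 0).prod (Measure.pi fun j => μ (Fin.succ j))) = _
    rw [MeasureTheory.lintegral_prod_mul (f := f 0)
      (g := fun x : ∀ j : Fin n, E (Fin.succ j) => ∏ j, f (Fin.succ j) (x j)) (hf 0).aemeasurable
      (Finset.measurable_prod _ fun j _ => (hf _).comp (measurable_pi_apply j)).aemeasurable]
    rw [ih (fun j => μ (Fin.succ j)) (fun j => f (Fin.succ j)) (fun j => hf _), Fin.prod_univ_succ]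

lemma pi_gauss (m : ℕ) :
    (Measure.pi fun _ : Fin m => gaussianReal 0 1)
      = (volume : Measure (Fin m → ℝ)).withDensity fun x => ∏ l, gaussianPDF 0 1 (x l) := by
  have hpdf : Measurable (gaussianPDF 0 1) :=
    (measurable_gaussianPDFReal 0 1).ennreal_ofReal
  refine Measure.pi_eq fun s hs => ?_
  rw [withDensity_apply _ (MeasurableSet.univ_pi hs)]
  rw [← lintegral_indicator (MeasurableSet.univ_pi hs)]
  have : (Set.univ.pi s).indicator (fun x : Fin m → ℝ => ∏ l, gaussianPDF 0 1 (x l))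
      = fun x => ∏ l, (s l).indicator (gaussianPDF 0 1) (x l) := by
    funext x
    by_cases hx : x ∈ Set.univ.pi s
    · rw [Set.indicator_of_mem hx]
      refine Finset.prod_congr rfl fun l _ => ?_
      rw [Set.indicator_of_mem (hx l (Set.mem_univ l))]
    · rw [Set.indicator_of_notMem hx]
      rw [Set.mem_univ_pi] at hx
      push_neg at hx
      obtain ⟨l, hl⟩ := hx
      exact (Finset.prod_eq_zero (Finset.mem_univ l)
        (by rw [Set.indicator_of_notMem hl])).symm
  rw [this, MeasureTheory.volume_pi, lintegral_pi_prod _ _ (fun l => hpdf.indicator (hs l))]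
  refine Finset.prod_congr rfl fun l _ => ?_
  rw [lintegral_indicator (hs l), gaussianReal_of_var_ne_zero _ one_ne_zero,
    withDensity_apply _ (hs l)]

lemma gaussDensity_norm (m : ℕ) (x y : Fin m → ℝ) (h : ∑ l, x l ^ 2 = ∑ l, y l ^ 2) :
    ∏ l, gaussianPDF 0 1 (x l) = ∏ l, gaussianPDF 0 1 (y l) := by
  have key : ∀ z : Fin m → ℝ, ∏ l, gaussianPDF 0 1 (z l)
      = ENNReal.ofReal ((Real.sqrt (2 * Real.pi))⁻¹ ^ m
          * Real.exp (-(∑ l, z l ^ 2) / 2)) := by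
    intro z
    simp_rw [gaussianPDF_def]
    rw [← ENNReal.ofReal_prod_of_nonneg (fun l _ => gaussianPDFReal_nonneg 0 1 (z l))]
    congr 1
    have : ∀ l, gaussianPDFReal 0 1 (z l)
        = (Real.sqrt (2 * Real.pi))⁻¹ * Real.exp (-(z l ^ 2) / 2) := by
      intro l
      simp [gaussianPDFReal]
    simp_rw [this, Finset.prod_mul_distrib, Finset.prod_const, ← Real.exp_sum,
      Finset.card_univ, Fintype.card_fin]
    congr 2
    rw [← Finset.sum_div, ← Finset.sum_neg_distrib]
  rw [key x, key y, h]

lemma gauss_rowInvariant {m : ℕ} {g : (Fin m → ℝ) → (Fin m → ℝ)} (hg : Measurable g)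
    (hvol : MeasurePreserving g volume volume)
    (hnorm : ∀ x, ∑ l, g x l ^ 2 = ∑ l, x l ^ 2) :
    MeasurePreserving g (Measure.pi fun _ : Fin m => gaussianReal 0 1)
      (Measure.pi fun _ : Fin m => gaussianReal 0 1) := by
  set D : (Fin m → ℝ) → ℝ≥0∞ := fun x => ∏ l, gaussianPDF 0 1 (x l) with hD_def
  have hD : Measurable D :=
    Finset.measurable_prod _ fun l _ =>
      ((measurable_gaussianPDFReal 0 1).ennreal_ofReal).comp (measurable_pi_apply l)
  have hDg : ∀ x, D (g x) = D x := fun x => gaussDensity_norm m (g x) x (hnorm x)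
  refine ⟨hg, ?_⟩
  ext A hA
  rw [Measure.map_apply hg hA, pi_gauss, withDensity_apply _ (hg hA), withDensity_apply _ hA,
    ← lintegral_indicator (hg hA), ← lintegral_indicator hA]
  calc ∫⁻ x, (g ⁻¹' A).indicator D x ∂volume
      = ∫⁻ x, (A.indicator D) (g x) ∂volume := by
        congr 1
        funext x
        by_cases hx : g x ∈ A
        · rw [Set.indicator_of_mem hx, Set.indicator_of_mem (Set.mem_preimage.mpr hx), hDg]
        · rw [Set.indicator_of_notMem hx]
          exact Set.indicator_of_notMem (fun h : x ∈ g ⁻¹' A => hx h) D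
    _ = ∫⁻ y, A.indicator D y ∂(Measure.map g volume) :=
        (lintegral_map (hD.indicator hA) hg).symm
    _ = ∫⁻ y, A.indicator D y ∂volume := by rw [hvol.map_eq]

lemma gauss_matInvariant {n m : ℕ} {g : (Fin m → ℝ) → (Fin m → ℝ)}
    (hrow : MeasurePreserving g (Measure.pi fun _ : Fin m => gaussianReal 0 1)
      (Measure.pi fun _ : Fin m => gaussianReal 0 1)) :
    MeasurePreserving (fun X : Fin n → Fin m → ℝ => fun k => g (X k))
      (Measure.pi fun _ : Fin n => Measure.pi fun _ : Fin m => gaussianReal 0 1)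
      (Measure.pi fun _ : Fin n => Measure.pi fun _ : Fin m => gaussianReal 0 1) := by
  have hT : Measurable (fun X : Fin n → Fin m → ℝ => fun k => g (X k)) :=
    measurable_pi_lambda _ fun k => hrow.measurable.comp (measurable_pi_apply k)
  refine ⟨hT, ?_⟩
  refine Eq.symm (Measure.pi_eq (μ := fun _ : Fin n => Measure.pi fun _ : Fin m => gaussianReal 0 1) fun s hs => ?_)
  rw [Measure.map_apply hT (MeasurableSet.univ_pi hs)]
  have : (fun X : Fin n → Fin m → ℝ => fun k => g (X k)) ⁻¹' Set.univ.pi s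
      = Set.univ.pi fun k => g ⁻¹' s k := by
    ext X
    simp [Set.mem_univ_pi]
  rw [this, Measure.pi_pi]
  exact Finset.prod_congr rfl fun k _ => hrow.measure_preimage (hs k).nullMeasurableSet

open scoped RealInnerProductSpace in
lemma exists_isom {E : Type*} [NormedAddCommGroup E] [InnerProductSpace ℝ E]
    [FiniteDimensional ℝ E] (u v u' v' : E)
    (h1 : ⟪u, u⟫ = ⟪u', u'⟫) (h2 : ⟪v, v⟫ = ⟪v', v'⟫) (h3 : ⟪u, v⟫ = ⟪u', v'⟫) :
    ∃ e : E ≃ₗᵢ[ℝ] E, e u = u' ∧ e v = v' := by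
  let S : (ℝ × ℝ) →ₗ[ℝ] E :=
    (LinearMap.toSpanSingleton ℝ E u).comp (LinearMap.fst ℝ ℝ ℝ)
      + (LinearMap.toSpanSingleton ℝ E v).comp (LinearMap.snd ℝ ℝ ℝ)
  let T : (ℝ × ℝ) →ₗ[ℝ] E :=
    (LinearMap.toSpanSingleton ℝ E u').comp (LinearMap.fst ℝ ℝ ℝ)
      + (LinearMap.toSpanSingleton ℝ E v').comp (LinearMap.snd ℝ ℝ ℝ)
  have hS : ∀ p : ℝ × ℝ, S p = p.1 • u + p.2 • v := fun p => rfl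
  have hT : ∀ p : ℝ × ℝ, T p = p.1 • u' + p.2 • v' := fun p => rfl
  have hinner : ∀ p : ℝ × ℝ, ⟪S p, S p⟫ = ⟪T p, T p⟫ := by
    intro p
    rw [hS, hT]
    simp only [inner_add_left, inner_add_right, real_inner_smul_left, real_inner_smul_right]
    rw [h1, h2, h3, real_inner_comm u v, h3, real_inner_comm v' u']
  have hnorm : ∀ p : ℝ × ℝ, ‖S p‖ = ‖T p‖ := by
    intro p
    have h := hinner p
    rw [real_inner_self_eq_norm_sq, real_inner_self_eq_norm_sq] at h
    exact (sq_eq_sq₀ (norm_nonneg _) (norm_nonneg _)).mp h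
  have hker : LinearMap.ker S ≤ LinearMap.ker T := by
    intro p hp
    rw [LinearMap.mem_ker] at hp ⊢
    have : ‖T p‖ = 0 := by rw [← hnorm, hp, norm_zero]
    exact norm_eq_zero.mp this
  let L0 : ((ℝ × ℝ) ⧸ LinearMap.ker S) →ₗ[ℝ] E := Submodule.liftQ _ T hker
  let q := LinearMap.quotKerEquivRange S
  let L : ↥(LinearMap.range S) →ₗ[ℝ] E := L0.comp (q.symm : _ →ₗ[ℝ] _)
  have hL : ∀ (p : ℝ × ℝ) (w : LinearMap.range S), (w : E) = S p → L w = T p := by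
    intro p w hw
    have hq : q.symm w = Submodule.Quotient.mk p := by
      rw [LinearEquiv.symm_apply_eq]
      exact Subtype.ext (by rw [LinearMap.quotKerEquivRange_apply_mk, ← hw])
    show L0 (q.symm w) = T p
    rw [hq, Submodule.liftQ_apply]
  have hLnorm : ∀ w : LinearMap.range S, ‖L w‖ = ‖w‖ := by
    intro w
    obtain ⟨p, hp⟩ := w.2
    rw [hL p w hp.symm, ← hnorm]
    show ‖S p‖ = ‖(w : E)‖
    rw [hp]
  let Li : ↥(LinearMap.range S) →ₗᵢ[ℝ] E := ⟨L, hLnorm⟩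
  let ext := Li.extend
  have hsurj : Function.Surjective ext :=
    LinearMap.surjective_of_injective (f := ext.toLinearMap) ext.injective
  refine ⟨LinearIsometryEquiv.ofSurjective ext hsurj, ?_, ?_⟩
  · have humem : u ∈ LinearMap.range S := ⟨(1, 0), by rw [hS]; simp⟩
    have : (LinearIsometryEquiv.ofSurjective ext hsurj) u = ext u := rfl
    rw [this, show u = ((⟨u, humem⟩ : LinearMap.range S) : E) from rfl,
      LinearIsometry.extend_apply]
    have : Li ⟨u, humem⟩ = T (1, 0) := hL (1, 0) ⟨u, humem⟩ (by rw [hS]; simp)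
    rw [this, hT]
    simp
  · have hvmem : v ∈ LinearMap.range S := ⟨(0, 1), by rw [hS]; simp⟩
    have : (LinearIsometryEquiv.ofSurjective ext hsurj) v = ext v := rfl
    rw [this, show v = ((⟨v, hvmem⟩ : LinearMap.range S) : E) from rfl,
      LinearIsometry.extend_apply]
    have : Li ⟨v, hvmem⟩ = T (0, 1) := hL (0, 1) ⟨v, hvmem⟩ (by rw [hS]; simp)
    rw [this, hT]
    simp

theorem stmt12 (n m : ℕ) (hn : 0 < n) (hm : 0 < m)
    (u v u' v' : Fin m → ℝ)
    (hu : ∑ k, u k ^ 2 = 1) (hv : ∑ k, v k ^ 2 = 1)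
    (hu' : ∑ k, u' k ^ 2 = 1) (hv' : ∑ k, v' k ^ 2 = 1)
    (hdot : ∑ k, u k * v k = ∑ k, u' k * v' k) :
    En n m u v = En n m u' v' := by
  classical
  let κ : EuclideanSpace ℝ (Fin m) ≃ᵐ (Fin m → ℝ) := (MeasurableEquiv.toLp 2 (Fin m → ℝ)).symm
  have hκ : ∀ x : EuclideanSpace ℝ (Fin m), κ x = x := fun _ => rfl
  have hκs : ∀ x : Fin m → ℝ, (κ.symm x : EuclideanSpace ℝ (Fin m)) = x := fun _ => rfl
  have hinner : ∀ x y : EuclideanSpace ℝ (Fin m), ⟪x, y⟫ = ∑ l, κ x l * κ y l := by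
    intro x y
    simp [PiLp.inner_apply, RCLike.inner_apply, hκ, mul_comm]
  obtain ⟨e, heu, hev⟩ := exists_isom (E := EuclideanSpace ℝ (Fin m)) (κ.symm u) (κ.symm v) (κ.symm u') (κ.symm v')
    (by simp only [hinner, hκ, hκs]; simp only [← sq]; rw [hu, hu'])
    (by simp only [hinner, hκ, hκs]; simp only [← sq]; rw [hv, hv'])
    (by simp only [hinner, hκ, hκs]; exact hdot)
  let f := e.symm
  let g : (Fin m → ℝ) → (Fin m → ℝ) := fun x => κ (f (κ.symm x))
  have hg : Measurable g :=
    κ.measurable.comp (f.continuous.measurable.comp κ.symm.measurable)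
  have hvol : MeasurePreserving g volume volume :=
    (EuclideanSpace.volume_preserving_symm_measurableEquiv_toLp (Fin m)).comp
      ((f.measurePreserving).comp
        (EuclideanSpace.volume_preserving_symm_measurableEquiv_toLp (Fin m)).symm)
  have hnormg : ∀ x : Fin m → ℝ, ∑ l, g x l ^ 2 = ∑ l, x l ^ 2 := by
    intro x
    have h := f.norm_map (κ.symm x)
    rw [EuclideanSpace.norm_eq, EuclideanSpace.norm_eq] at h
    have h2 := congrArg (· ^ 2) h
    simp only [Real.sq_sqrt (Finset.sum_nonneg fun l _ => sq_nonneg _)] at h2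
    simpa [Real.norm_eq_abs, sq_abs, hκ, hκs, g] using h2
  have hrow := gauss_rowInvariant hg hvol hnormg
  have hmat := gauss_matInvariant (n := n) hrow
  let Gequiv : (Fin m → ℝ) ≃ᵐ (Fin m → ℝ) := (κ.symm.trans f.toMeasurableEquiv).trans κ
  let Tequiv : (Fin n → Fin m → ℝ) ≃ᵐ (Fin n → Fin m → ℝ) :=
    MeasurableEquiv.piCongrRight fun _ : Fin n => Gequiv
  have hembed : MeasurableEmbedding (fun X : Fin n → Fin m → ℝ => fun k => g (X k)) :=
    Tequiv.measurableEmbedding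
  -- inner product swap
  have hswapu : ∀ x : Fin m → ℝ, ∑ l, g x l * u l = ∑ l, x l * u' l := by
    intro x
    have : ⟪f (κ.symm x), κ.symm u⟫ = ⟪(κ.symm x : EuclideanSpace ℝ (Fin m)), κ.symm u'⟫ := by
      rw [← heu, ← LinearIsometryEquiv.inner_map_map e (f (κ.symm x)) (κ.symm u),
        e.apply_symm_apply]
    simpa [hinner, hκ, hκs, g] using this
  have hswapv : ∀ x : Fin m → ℝ, ∑ l, g x l * v l = ∑ l, x l * v' l := by
    intro x
    have : ⟪f (κ.symm x), κ.symm v⟫ = ⟪(κ.symm x : EuclideanSpace ℝ (Fin m)), κ.symm v'⟫ := by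
      rw [← hev, ← LinearIsometryEquiv.inner_map_map e (f (κ.symm x)) (κ.symm v),
        e.apply_symm_apply]
    simpa [hinner, hκ, hκs, g] using this
  have hnmulu : ∀ X : Fin n → Fin m → ℝ, nmul (fun k => g (X k)) u = nmul X u' := by
    intro X; funext k; simpa [nmul] using hswapu (X k)
  have hnmulv : ∀ X : Fin n → Fin m → ℝ, nmul (fun k => g (X k)) v = nmul X v' := by
    intro X; funext k; simpa [nmul] using hswapv (X k)
  have key := hmat.integral_comp hembed
    (fun X => ∑ k, (nmul X u k / nnorm (nmul X u)) * (nmul X v k / nnorm (nmul X v)))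
  have lhs_eq : (∫ X, (∑ k, (nmul (fun k' => g (X k')) u k / nnorm (nmul (fun k' => g (X k')) u))
        * (nmul (fun k' => g (X k')) v k / nnorm (nmul (fun k' => g (X k')) v)))
      ∂(Measure.pi fun _ : Fin n => Measure.pi fun _ : Fin m => gaussianReal 0 1))
      = En n m u' v' := by
    unfold En gaussNM
    congr 1
    funext X
    rw [hnmulu X, hnmulv X]
  unfold En gaussNM at *
  rw [← key, lhs_eq]
end

section
/- For every integer n ≥ 2, the double integral ((n−1)/(2π)) · ∫_0^1 ∫_0^{2π} r·(1 − r²)^{(n−1)/2} / (1 − r²·sin²(φ))^{3/2} dφ dr equals γ(n) = (2/n)·(Γ((n+1)/2)/Γ(n/2))². -/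
open Real MeasureTheory Set intervalIntegral
open scoped Interval

lemma realBeta {u v : ℝ} (hu : 0 < u) (hv : 0 < v) :
    ∫ x in (0:ℝ)..1, x ^ (u-1) * (1-x) ^ (v-1) = Gamma u * Gamma v / Gamma (u+v) := by
  have h1 : Complex.betaIntegral u v
      = ((∫ x in (0:ℝ)..1, x ^ (u-1) * (1-x) ^ (v-1) : ℝ) : ℂ) := by
    rw [Complex.betaIntegral, ← intervalIntegral.integral_ofReal]
    refine intervalIntegral.integral_congr fun x hx => ?_
    rw [uIcc_of_le zero_le_one] at hx
    rw [Complex.ofReal_mul, Complex.ofReal_cpow hx.1,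
      Complex.ofReal_cpow (by linarith [hx.2] : (0:ℝ) ≤ 1 - x)]
    push_cast; ring
  have h2 := Complex.Gamma_mul_Gamma_eq_betaIntegral
    (s := (u:ℂ)) (t := (v:ℂ)) (by simpa using hu) (by simpa using hv)
  rw [h1, ← Complex.ofReal_add, Complex.Gamma_ofReal, Complex.Gamma_ofReal,
    Complex.Gamma_ofReal, ← Complex.ofReal_mul, ← Complex.ofReal_mul] at h2
  have h3 := Complex.ofReal_injective h2
  have h4 : Gamma (u+v) ≠ 0 := (Gamma_pos_of_pos (by linarith)).ne'
  field_simp [h3]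
  rw [h3]; ring

lemma betaIntegrable {u v : ℝ} (hu : 0 < u) (hv : 0 < v) :
    IntervalIntegrable (fun x : ℝ => x ^ (u-1) * (1-x) ^ (v-1)) volume 0 1 := by
  have h := Complex.betaIntegral_convergent (u := u) (v := v) (by simpa using hu) (by simpa using hv)
  rw [intervalIntegrable_iff] at h ⊢
  have h2 := h.re
  refine h2.congr ?_
  filter_upwards [ae_restrict_mem measurableSet_uIoc] with x hx
  rw [uIoc_of_le zero_le_one] at hx
  have e1 : ((x:ℝ) : ℂ) ^ ((u:ℂ) - 1) = ((x ^ (u-1) : ℝ) : ℂ) := by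
    rw [Complex.ofReal_cpow hx.1.le]; push_cast; ring_nf
  have e2 : ((1:ℂ) - x) ^ ((v:ℂ) - 1) = (((1-x) ^ (v-1) : ℝ) : ℂ) := by
    rw [show ((1:ℂ) - x) = (((1 - x : ℝ)) : ℂ) by push_cast; ring,
      Complex.ofReal_cpow (by linarith [hx.2] : (0:ℝ) ≤ 1 - x)]
    push_cast; ring_nf
  rw [e1, e2, ← Complex.ofReal_mul]
  simp

lemma oneSubSqIntegrable {p : ℝ} (hp : -1 < p) :
    IntervalIntegrable (fun y : ℝ => (1-y^2)^p) volume (-1) 1 := by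
  have hmeas : ∀ a b : ℝ, AEStronglyMeasurable (fun y : ℝ => (1-y^2)^p)
      (volume.restrict (Ι a b)) := by
    intro a b
    exact (Measurable.aestronglyMeasurable (by fun_prop))
  have h01 : IntervalIntegrable (fun y : ℝ => (1-y^2)^p) volume 0 1 := by
    rcases le_or_gt 0 p with hp0 | hp0
    · exact (Continuous.rpow_const (by fun_prop) (fun x => Or.inr hp0)).intervalIntegrable 0 1
    · have base : IntervalIntegrable (fun y : ℝ => (1-y)^p) volume 0 1 := by
        have := (intervalIntegrable_rpow' (a := 0) (b := 1) hp).comp_sub_left 1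
        simpa using this.symm
      rw [intervalIntegrable_iff] at base ⊢
      refine MeasureTheory.Integrable.mono base (hmeas 0 1) ?_
      filter_upwards [ae_restrict_mem measurableSet_uIoc] with y hy
      rw [uIoc_of_le zero_le_one] at hy
      rcases eq_or_lt_of_le hy.2 with h1 | h1
      · subst h1
        simp [Real.zero_rpow (by linarith : p ≠ 0)]
      · have hb : (0:ℝ) < 1 - y := by linarith
        have hb2 : 1 - y ≤ 1 - y^2 := by nlinarith [hy.1]
        rw [Real.norm_of_nonneg (rpow_nonneg (by nlinarith [hy.1] : (0:ℝ) ≤ 1 - y^2) p),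
          Real.norm_of_nonneg (rpow_nonneg hb.le p)]
        exact rpow_le_rpow_of_nonpos hb hb2 hp0.le
  have hneg : IntervalIntegrable (fun y : ℝ => (1-y^2)^p) volume (-1) 0 := by
    have := (IntervalIntegrable.iff_comp_neg (by simp)).mp h01
    have h2 := this.symm
    simpa using h2
  exact hneg.trans h01

lemma oneSubSqIntegral {p : ℝ} (hp : -1 < p)
    (hint : IntervalIntegrable (fun y : ℝ => (1-y^2)^p) volume (-1) 1)
    (hbeta : IntervalIntegrable (fun x : ℝ => x ^ ((1:ℝ)/2-1) * (1-x) ^ (p+1-1)) volume 0 1)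
    (hrb : ∫ x in (0:ℝ)..1, x ^ ((1:ℝ)/2-1) * (1-x) ^ (p+1-1)
        = Gamma (1/2) * Gamma (p+1) / Gamma (1/2+(p+1))) :
    ∫ y in (-1:ℝ)..1, (1-y^2)^p = Gamma (1/2) * Gamma (p+1) / Gamma (p+3/2) := by
  set f : ℝ → ℝ := fun y => (1-y^2)^p with hf
  set g : ℝ → ℝ := fun u => u ^ (-(1:ℝ)/2) * (1-u) ^ p with hg
  have hne : ∀ᵐ x : ℝ, x ≠ 0 := by
    rw [ae_iff]
    simp only [ne_eq, not_not]
    simpa using Real.volume_singleton (a := 0)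
  have egx : ∀ x : ℝ, 0 < x → (2*x) • g (x^2) = 2 * f x := by
    intro x hx
    have e1 : (x^2 : ℝ) ^ (-(1:ℝ)/2) = x⁻¹ := by
      rw [← Real.rpow_natCast x 2, ← Real.rpow_mul hx.le]
      norm_num [Real.rpow_neg_one]
    simp only [hg, hf, smul_eq_mul, e1]
    field_simp
  have hsub : Set.uIcc (-1:ℝ) 0 ⊆ Set.uIcc (-1:ℝ) 1 := by
    rw [uIcc_of_le (by norm_num : (-1:ℝ) ≤ 0), uIcc_of_le (by norm_num : (-1:ℝ) ≤ 1)]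
    exact Icc_subset_Icc le_rfl (by norm_num)
  have hsub2 : Set.uIcc (0:ℝ) 1 ⊆ Set.uIcc (-1:ℝ) 1 := by
    rw [uIcc_of_le (by norm_num : (0:ℝ) ≤ 1), uIcc_of_le (by norm_num : (-1:ℝ) ≤ 1)]
    exact Icc_subset_Icc (by norm_num) le_rfl
  have hsplit : ∫ y in (-1:ℝ)..1, f y = (∫ y in (-1:ℝ)..0, f y) + ∫ y in (0:ℝ)..1, f y :=
    (integral_add_adjacent_intervals (hint.mono_set hsub) (hint.mono_set hsub2)).symm
  have hrefl : ∫ y in (-1:ℝ)..0, f y = ∫ y in (0:ℝ)..1, f y := by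
    have h1 : ∫ y in (0:ℝ)..1, f (-y) = ∫ y in (-1:ℝ)..(-0:ℝ), f y := integral_comp_neg f
    rw [neg_zero] at h1
    rw [← h1]
    exact integral_congr fun y _ => by simp [hf]
  have key : ∫ x in (0:ℝ)..1, (2*x) • g (x^2) = ∫ u in (0:ℝ)..1, g u := by
    have := integral_comp_smul_deriv''' (f := fun x : ℝ => x^2) (f' := fun x => 2*x)
      (g := g) (a := 0) (b := 1)
      (by fun_prop)
      (fun x hx => by simpa using (hasDerivAt_pow 2 x).hasDerivWithinAt)
      ?_ ?_ ?_
    · simpa using this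
    · rintro u ⟨x, hx, rfl⟩
      norm_num at hx
      have h1 : (0:ℝ) < x^2 := by nlinarith [hx.1]
      have h2 : x^2 < 1 := by nlinarith [hx.1, hx.2]
      apply ContinuousWithinAt.mul
      · exact (Real.continuousAt_rpow_const _ _ (Or.inl h1.ne')).continuousWithinAt
      · refine (ContinuousAt.comp (x := (fun x : ℝ => x^2) x) (g := fun t : ℝ => t ^ p)
          (f := fun u : ℝ => 1 - u) ?_ (by fun_prop)).continuousWithinAt
        refine Real.continuousAt_rpow_const _ _ (Or.inl ?_)
        simp only
        nlinarith
    · have himg : (fun x : ℝ => x^2) '' Set.uIcc (0:ℝ) 1 ⊆ Icc 0 1 := by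
        rintro u ⟨x, hx, rfl⟩
        rw [uIcc_of_le zero_le_one] at hx
        show x^2 ∈ Icc (0:ℝ) 1
        exact ⟨by positivity, by nlinarith [hx.1, hx.2]⟩
      refine IntegrableOn.mono_set ?_ himg
      have hb := hbeta
      rw [intervalIntegrable_iff', uIcc_of_le zero_le_one] at hb
      refine hb.congr_fun ?_ measurableSet_Icc
      intro x _
      norm_num [hg]
    · have hI : IntegrableOn (fun x : ℝ => 2 * f x) (Set.uIcc (0:ℝ) 1) := by
        rw [uIcc_of_le zero_le_one]
        have h2 := (hint.mono_set hsub2).const_mul 2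
        rw [intervalIntegrable_iff', uIcc_of_le zero_le_one] at h2
        exact h2
      refine hI.congr ?_
      filter_upwards [ae_restrict_of_ae hne, ae_restrict_mem measurableSet_uIcc]
        with x hx0 hx
      rw [uIcc_of_le zero_le_one] at hx
      exact (egx x (lt_of_le_of_ne hx.1 (Ne.symm hx0))).symm
  have hL : ∫ x in (0:ℝ)..1, (2*x) • g (x^2) = 2 * ∫ y in (0:ℝ)..1, f y := by
    rw [← intervalIntegral.integral_const_mul]
    refine integral_congr_ae ?_
    filter_upwards [hne] with x hx0 hx
    rw [uIoc_of_le zero_le_one] at hx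
    exact egx x hx.1
  have hR : ∫ u in (0:ℝ)..1, g u = Gamma (1/2) * Gamma (p+1) / Gamma (p+3/2) := by
    have harg : (1:ℝ)/2+(p+1) = p+3/2 := by ring
    rw [harg] at hrb
    rw [← hrb]
    refine integral_congr fun x _ => ?_
    norm_num [hg]
  rw [hL, hR] at key
  have final : ∫ y in (-1:ℝ)..1, f y = Gamma (1/2) * Gamma (p+1) / Gamma (p+3/2) := by
    rw [hsplit, hrefl]; linarith [key]
  exact final

lemma oneSubSqIntegrable' {p : ℝ} (hp : -1 < p) :
    IntervalIntegrable (fun y : ℝ => (1-y^2)^p) volume (-1) 1 :=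
  oneSubSqIntegrable hp

lemma oneSubSq' {p : ℝ} (hp : -1 < p) :
    ∫ y in (-1:ℝ)..1, (1-y^2)^p = Gamma (1/2) * Gamma (p+1) / Gamma (p+3/2) :=
  oneSubSqIntegral hp (oneSubSqIntegrable hp)
    (betaIntegrable (by norm_num) (by linarith))
    (realBeta (by norm_num) (by linarith))

set_option maxHeartbeats 1000000 in
theorem stmt13 (n : ℕ) (hn : 2 ≤ n) :
    ((n : ℝ) - 1) / (2 * Real.pi) *
      ∫ r in (0 : ℝ)..1, ∫ φ in (0 : ℝ)..(2 * Real.pi),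
        r * (1 - r ^ 2) ^ (((n : ℝ) - 1) / 2) /
          (1 - r ^ 2 * Real.sin φ ^ 2) ^ ((3 : ℝ) / 2) = gam n := by
  have hπ : (0:ℝ) < π := Real.pi_pos
  have hn2 : (2:ℝ) ≤ (n:ℝ) := by exact_mod_cast hn
  set a : ℝ := ((n:ℝ)-1)/2 with ha_def
  have ha : 0 < a := by rw [ha_def]; linarith
  set F : ℝ × ℝ → ℝ := fun p =>
    if p.1^2 + p.2^2 < 1 then (1 - p.1^2 - p.2^2) ^ a * (1 - p.2^2) ^ (-(3:ℝ)/2) else 0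
    with hF_def
  have hFmeas : Measurable F := by
    refine Measurable.ite ?_ (by fun_prop) measurable_const
    exact measurableSet_lt (by fun_prop) measurable_const
  have hFnonneg : ∀ p, 0 ≤ F p := by
    intro p
    simp only [hF_def]
    split_ifs with h
    · have h1 : (0:ℝ) ≤ 1 - p.1^2 - p.2^2 := by nlinarith
      have h2 : (0:ℝ) ≤ 1 - p.2^2 := by nlinarith [sq_nonneg p.1]
      positivity
    · exact le_rfl
  set C : ℝ := ∫ t in (-1:ℝ)..1, (1-t^2)^a with hC_def
  set D : ℝ := ∫ y in (-1:ℝ)..1, (1-y^2)^(a-1) with hD_def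
  -- slice description
  have hslice : ∀ y : ℝ, -1 < y → y < 1 → ∀ x : ℝ,
      F (x, y) = indicator (Ioo (-(Real.sqrt (1-y^2))) (Real.sqrt (1-y^2)))
        (fun x => (1 - x^2 - y^2) ^ a * (1 - y^2) ^ (-(3:ℝ)/2)) x := by
    intro y hy1 hy2 x
    have hy : (0:ℝ) < 1 - y^2 := by nlinarith
    set c := Real.sqrt (1-y^2) with hc_def
    have hc2 : c^2 = 1-y^2 := Real.sq_sqrt hy.le
    have hc : 0 < c := Real.sqrt_pos.2 hy
    rw [Set.indicator_apply]
    by_cases hmem : x ∈ Ioo (-c) c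
    · rw [if_pos hmem]
      simp only [hF_def]
      rw [if_pos (by nlinarith [sq_lt_sq' hmem.1 hmem.2])]
    · rw [if_neg hmem]
      simp only [hF_def]
      rw [if_neg ?_]
      simp only [mem_Ioo, not_and_or, not_lt] at hmem
      rcases hmem with h | h
      · intro hcon; nlinarith
      · intro hcon; nlinarith
  -- x-integral
  have hxint : ∀ y : ℝ, -1 < y → y < 1 →
      ∫ x : ℝ, F (x, y) = (1-y^2)^(a-1) * C := by
    intro y hy1 hy2
    have hy : (0:ℝ) < 1 - y^2 := by nlinarith
    set c := Real.sqrt (1-y^2) with hc_def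
    have hc2 : c^2 = 1-y^2 := Real.sq_sqrt hy.le
    have hc : 0 < c := Real.sqrt_pos.2 hy
    have h1 : ∫ x : ℝ, F (x, y)
        = ∫ x in Ioo (-c) c, (1 - x^2 - y^2) ^ a * (1-y^2) ^ (-(3:ℝ)/2) := by
      rw [← MeasureTheory.integral_indicator measurableSet_Ioo]
      exact integral_congr_ae (ae_of_all _ fun x => hslice y hy1 hy2 x)
    have h2 : ∫ x in Ioo (-c) c, (1 - x^2 - y^2) ^ a * (1-y^2) ^ (-(3:ℝ)/2)
        = (∫ x in (-c)..c, (1 - x^2 - y^2) ^ a) * (1-y^2) ^ (-(3:ℝ)/2) := by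
      rw [← intervalIntegral.integral_mul_const,
        intervalIntegral.integral_of_le (by linarith), integral_Ioc_eq_integral_Ioo]
    have hgcont : Continuous (fun x : ℝ => (1 - x^2 - y^2) ^ a) :=
      Continuous.rpow_const (by fun_prop) (fun x => Or.inr ha.le)
    have h3 : ∫ t in (-1:ℝ)..1, c • ((fun x : ℝ => (1 - x^2 - y^2) ^ a) ∘ (fun t => c*t)) t
        = ∫ x in (c * (-1))..(c * 1), (1 - x^2 - y^2) ^ a :=
      integral_comp_smul_deriv (f := fun t => c * t) (f' := fun _ => c)
        (fun t _ => by simpa using (hasDerivAt_id t).const_mul c)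
        continuousOn_const hgcont
    have h4 : ∫ t in (-1:ℝ)..1, c • ((fun x : ℝ => (1 - x^2 - y^2) ^ a) ∘ (fun t => c*t)) t
        = (c * (c^2)^a) * C := by
      rw [hC_def, ← intervalIntegral.integral_const_mul]
      refine integral_congr fun t ht => ?_
      rw [uIcc_of_le (by norm_num : (-1:ℝ) ≤ 1)] at ht
      have ht2 : (0:ℝ) ≤ 1 - t^2 := by nlinarith [ht.1, ht.2]
      have e0 : 1 - (c*t)^2 - y^2 = c^2 * (1-t^2) := by
        linear_combination -hc2
      simp only [Function.comp, smul_eq_mul]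
      rw [e0, Real.mul_rpow (sq_nonneg c) ht2]
      ring
    have h5 : (∫ x in (-c)..c, (1 - x^2 - y^2) ^ a) = (c * (c^2)^a) * C := by
      rw [← h4, h3]
      norm_num
    rw [h1, h2, h5]
    have e1 : c = (1-y^2) ^ ((1:ℝ)/2) := by
      rw [hc_def, Real.sqrt_eq_rpow]
    have e2 : c * (c^2)^a * (1-y^2) ^ (-(3:ℝ)/2) = (1-y^2)^(a-1) := by
      rw [hc2, e1, ← Real.rpow_add hy, ← Real.rpow_add hy]
      congr 1
      ring
    rw [mul_right_comm, e2]
  -- zero slices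
  have hzero : ∀ y : ℝ, 1 ≤ y^2 → ∀ x : ℝ, F (x, y) = 0 := by
    intro y hy x
    simp only [hF_def]
    rw [if_neg]
    intro hcon
    nlinarith [sq_nonneg x]
  have hne : ∀ b : ℝ, ∀ᵐ x : ℝ, x ≠ b := by
    intro b
    rw [ae_iff]
    simp only [ne_eq, not_not]
    simpa using Real.volume_singleton (a := b)
  set G : ℝ → ℝ := indicator (Ioo (-1:ℝ) 1) (fun y => (1-y^2)^(a-1) * C) with hG_def
  have hGfun : ∀ y : ℝ, ∫ x : ℝ, F (x, y) = G y := by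
    intro y
    by_cases hy : y ∈ Ioo (-1:ℝ) 1
    · rw [hG_def, indicator_of_mem hy]
      exact hxint y hy.1 hy.2
    · rw [hG_def, indicator_of_notMem hy]
      have hy2 : 1 ≤ y^2 := by
        simp only [mem_Ioo, not_and_or, not_lt] at hy
        rcases hy with h | h
        · nlinarith
        · nlinarith
      simp [hzero y hy2]
  have hG_int : Integrable G := by
    rw [hG_def]
    rw [integrable_indicator_iff measurableSet_Ioo]
    have h1 := (oneSubSqIntegrable' (by linarith : (-1:ℝ) < a-1)).mul_const C
    rw [intervalIntegrable_iff, uIoc_of_le (by norm_num : (-1:ℝ) ≤ 1)] at h1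
    exact h1.mono_set Ioo_subset_Ioc_self
  have hslice_int : ∀ᵐ y : ℝ, Integrable (fun x => F (x, y)) := by
    filter_upwards [hne 1, hne (-1)] with y h1 h2
    rcases lt_trichotomy (y^2) 1 with h | h | h
    · have hy1 : -1 < y := by nlinarith
      have hy2 : y < 1 := by nlinarith
      have heq : (fun x => F (x, y)) = indicator (Ioo (-(Real.sqrt (1-y^2))) (Real.sqrt (1-y^2)))
          (fun x => (1 - x^2 - y^2) ^ a * (1 - y^2) ^ (-(3:ℝ)/2)) :=
        funext (hslice y hy1 hy2)
      rw [heq, integrable_indicator_iff measurableSet_Ioo]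
      have hcont : Continuous (fun x : ℝ => (1 - x^2 - y^2) ^ a * (1 - y^2) ^ (-(3:ℝ)/2)) :=
        (Continuous.rpow_const (by fun_prop) (fun x => Or.inr ha.le)).mul continuous_const
      exact (hcont.integrableOn_Icc).mono_set Ioo_subset_Icc_self
    · exfalso
      have : (y-1)*(y+1) = 0 := by linear_combination h
      rcases mul_eq_zero.1 this with h' | h'
      · exact h1 (by linarith)
      · exact h2 (by linarith)
    · have heq : (fun x => F (x, y)) = fun _ => (0:ℝ) := funext (hzero y h.le)
      rw [heq]
      exact integrable_zero _ _ _
  have hvol : (volume : Measure (ℝ × ℝ)) = (volume : Measure ℝ).prod volume :=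
    Measure.volume_eq_prod ℝ ℝ
  have hFintP : Integrable F ((volume : Measure ℝ).prod volume) := by
    refine (integrable_prod_iff' ?_).2 ⟨?_, ?_⟩
    · rw [← hvol]; exact hFmeas.aestronglyMeasurable
    · exact hslice_int
    · have hnorm : (fun y : ℝ => ∫ x : ℝ, ‖F (x, y)‖) = G := funext fun y => by
        rw [← hGfun y]
        exact MeasureTheory.integral_congr_ae
          (ae_of_all _ fun x => Real.norm_of_nonneg (hFnonneg _))
      rw [hnorm]
      exact hG_int
  have hFint : Integrable F := by rw [hvol]; exact hFintP
  have hcart : ∫ p : ℝ × ℝ, F p = D * C := by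
    have h1 : ∫ p : ℝ × ℝ, F p = ∫ y : ℝ, ∫ x : ℝ, F (x, y) := by
      rw [hvol]
      exact MeasureTheory.integral_prod_symm F hFintP
    rw [h1]
    have h2 : ∫ y : ℝ, ∫ x : ℝ, F (x, y) = ∫ y : ℝ, G y :=
      MeasureTheory.integral_congr_ae (ae_of_all _ hGfun)
    rw [h2, hG_def, MeasureTheory.integral_indicator measurableSet_Ioo]
    rw [← integral_Ioc_eq_integral_Ioo, ← intervalIntegral.integral_of_le (by norm_num : (-1:ℝ) ≤ 1)]
    rw [intervalIntegral.integral_mul_const]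
  -- polar change of variables
  have hpolar : ∫ p in polarCoord.target, p.1 • F (polarCoord.symm p) = ∫ p, F p :=
    integral_comp_polarCoord_symm F
  set B : ℝ × ℝ → ℝ × ℝ →L[ℝ] ℝ × ℝ := fun p =>
    LinearMap.toContinuousLinearMap (Matrix.toLin (Module.Basis.finTwoProd ℝ) (Module.Basis.finTwoProd ℝ)
      !![Real.cos p.2, -p.1 * Real.sin p.2; Real.sin p.2, p.1 * Real.cos p.2]) with hB_def
  have hBdet : ∀ p : ℝ × ℝ, (B p).det = p.1 := by
    intro p
    conv_rhs => rw [← one_mul p.1, ← Real.cos_sq_add_sin_sq p.2]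
    simp only [hB_def, neg_mul, LinearMap.det_toContinuousLinearMap, LinearMap.det_toLin,
      Matrix.det_fin_two_of, sub_neg_eq_add]
    ring
  have htmeas : MeasurableSet polarCoord.target := polarCoord.open_target.measurableSet
  have hpint : IntegrableOn (fun p : ℝ × ℝ => p.1 • F (polarCoord.symm p)) polarCoord.target := by
    have hder : ∀ p ∈ polarCoord.target,
        HasFDerivWithinAt polarCoord.symm (B p) polarCoord.target p :=
      fun p _ => (hasFDerivAt_polarCoord_symm p).hasFDerivWithinAt
    have hinj : InjOn polarCoord.symm polarCoord.target := polarCoord.symm.injOn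
    have h1 : IntegrableOn F (polarCoord.symm '' polarCoord.target) := hFint.integrableOn
    rw [integrableOn_image_iff_integrableOn_abs_det_fderiv_smul volume htmeas hder hinj F] at h1
    refine h1.congr_fun (fun p hp => ?_) htmeas
    beta_reduce
    rw [hBdet p, abs_of_pos hp.1]
  have hiter : ∫ p in polarCoord.target, p.1 • F (polarCoord.symm p)
      = ∫ r in Ioi (0:ℝ), ∫ φ in Ioo (-π) π, r • F (polarCoord.symm (r, φ)) := by
    rw [polarCoord_target] at hpint ⊢
    rw [hvol] at hpint ⊢
    exact MeasureTheory.setIntegral_prod _ hpint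
  -- matching inner integrals
  have hmatch : ∀ r : ℝ, r ∈ Ioo (0:ℝ) 1 →
      (∫ φ in (0:ℝ)..(2*π), r * (1 - r^2) ^ a / (1 - r^2 * Real.sin φ^2) ^ ((3:ℝ)/2))
        = ∫ φ in Ioo (-π) π, r • F (polarCoord.symm (r, φ)) := by
    intro r hr
    have hper : Function.Periodic
        (fun φ : ℝ => r * (1 - r^2) ^ a / (1 - r^2 * Real.sin φ^2) ^ ((3:ℝ)/2)) (2*π) := by
      intro φ
      simp [Real.sin_add_two_pi]
    have h1 := hper.intervalIntegral_add_eq 0 (-π)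
    rw [zero_add] at h1
    rw [show -π + 2*π = π from by ring] at h1
    rw [h1, intervalIntegral.integral_of_le (by linarith), integral_Ioc_eq_integral_Ioo]
    refine setIntegral_congr_fun measurableSet_Ioo fun φ _ => ?_
    have hs1 : Real.sin φ ^ 2 ≤ 1 := Real.sin_sq_le_one φ
    have hX : 0 < 1 - r^2 * Real.sin φ^2 := by nlinarith [hr.1, hr.2, sq_nonneg (Real.sin φ)]
    have hrc : (r * Real.cos φ)^2 + (r * Real.sin φ)^2 = r^2 := by
      linear_combination r^2 * (Real.sin_sq_add_cos_sq φ)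
    simp only [polarCoord_symm_apply, hF_def, smul_eq_mul]
    rw [if_pos (by nlinarith [hr.1, hr.2] : (r * Real.cos φ)^2 + (r * Real.sin φ)^2 < 1)]
    rw [show 1 - (r * Real.cos φ)^2 - (r * Real.sin φ)^2 = 1 - r^2 from by
      linear_combination -hrc]
    rw [show 1 - (r * Real.sin φ)^2 = 1 - r^2 * Real.sin φ^2 from by ring]
    rw [show (-(3:ℝ))/2 = -((3:ℝ)/2) from by norm_num]
    rw [Real.rpow_neg hX.le]
    field_simp
  -- outer zero for r ≥ 1
  have houter0 : ∀ r : ℝ, 1 ≤ r →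
      (∫ φ in Ioo (-π) π, r • F (polarCoord.symm (r, φ))) = 0 := by
    intro r h1
    have hz : ∀ φ : ℝ, r • F (polarCoord.symm (r, φ)) = 0 := by
      intro φ
      have hrc : (r * Real.cos φ)^2 + (r * Real.sin φ)^2 = r^2 := by
        linear_combination r^2 * (Real.sin_sq_add_cos_sq φ)
      simp only [polarCoord_symm_apply, hF_def, smul_eq_mul]
      rw [if_neg (by nlinarith : ¬ ((r * Real.cos φ)^2 + (r * Real.sin φ)^2 < 1)), mul_zero]
    simp only [hz]
    simp
  -- assemble
  have hstmt : (∫ r in (0:ℝ)..1, ∫ φ in (0:ℝ)..(2*π),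
      r * (1 - r^2) ^ a / (1 - r^2 * Real.sin φ^2) ^ ((3:ℝ)/2)) = D * C := by
    set h : ℝ → ℝ := fun r => ∫ φ in Ioo (-π) π, r • F (polarCoord.symm (r, φ)) with hh_def
    have s1 : (∫ r in (0:ℝ)..1, ∫ φ in (0:ℝ)..(2*π),
        r * (1 - r^2) ^ a / (1 - r^2 * Real.sin φ^2) ^ ((3:ℝ)/2))
        = ∫ r in Ioo (0:ℝ) 1, h r := by
      rw [intervalIntegral.integral_of_le (by norm_num : (0:ℝ) ≤ 1), integral_Ioc_eq_integral_Ioo]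
      exact setIntegral_congr_fun measurableSet_Ioo fun r hr => hmatch r hr
    have s2 : ∫ r in Ioi (0:ℝ), h r = ∫ r in Ioo (0:ℝ) 1, h r := by
      have e : ∀ r ∈ Ioi (0:ℝ), h r = indicator (Ioo (0:ℝ) 1) h r := by
        intro r hr
        by_cases hr1 : r < 1
        · rw [indicator_of_mem (mem_Ioo.2 ⟨hr, hr1⟩)]
        · rw [indicator_of_notMem (by simp [hr1] : r ∉ Ioo (0:ℝ) 1), hh_def]
          exact houter0 r (not_lt.1 hr1)
      rw [setIntegral_congr_fun measurableSet_Ioi e,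
        MeasureTheory.setIntegral_indicator measurableSet_Ioo,
        Set.inter_eq_right.mpr (fun r hr => hr.1)]
    rw [s1, ← s2, hh_def]
    rw [← hiter, hpolar, hcart]
  rw [hstmt]
  -- Gamma computation
  have hC : C = Gamma (1/2) * Gamma (a+1) / Gamma (a+3/2) := by
    rw [hC_def]
    exact oneSubSq' (by linarith : (-1:ℝ) < a)
  have hD : D = Gamma (1/2) * Gamma a / Gamma (a+1/2) := by
    rw [hD_def, oneSubSq' (show (-1:ℝ) < a-1 by linarith)]
    rw [show a-1+1 = a from by ring, show a-1+3/2 = a+1/2 from by ring]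
  have hga1 : Gamma (a+1) = a * Gamma a := Real.Gamma_add_one ha.ne'
  have hn0 : ((n:ℝ)/2) ≠ 0 := by positivity
  have hga2 : Gamma (a+3/2) = ((n:ℝ)/2) * Gamma ((n:ℝ)/2) := by
    rw [show a+3/2 = (n:ℝ)/2+1 from by rw [ha_def]; ring]
    exact Real.Gamma_add_one hn0
  have hga3 : Gamma (a+1/2) = Gamma ((n:ℝ)/2) := by
    rw [show a+1/2 = (n:ℝ)/2 from by rw [ha_def]; ring]
  have hgam : gam n = 2/(n:ℝ) * ((a * Gamma a) / Gamma ((n:ℝ)/2))^2 := by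
    rw [gam, ← hga1, show a+1 = ((n:ℝ)+1)/2 from by rw [ha_def]; ring]
  rw [hC, hD, hga1, hga2, hga3, hgam, Real.Gamma_one_half_eq]
  have hZ : Gamma ((n:ℝ)/2) ≠ 0 := (Real.Gamma_pos_of_pos (by positivity)).ne'
  have hA : Gamma a ≠ 0 := (Real.Gamma_pos_of_pos ha).ne'
  have hsπ : Real.sqrt π ≠ 0 := (Real.sqrt_pos.2 hπ).ne'
  rw [show (2:ℝ)*π = 2*(Real.sqrt π * Real.sqrt π) from by rw [Real.mul_self_sqrt hπ.le],
    ha_def]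
  have hnn : (n:ℝ) ≠ 0 := by positivity
  field_simp
end

section
/- Let m be a positive integer and let A be an m×m real symmetric matrix such that A_{ij} ≤ 0 whenever i ≠ j and ∑_{i=1}^m A_{ij} = 0 for every j. Let v be a real number and let E : [−1, 1] → ℝ be a function with E(1) = 1 such that 1 − E(t) ≥ v·(1 − t) for all t ∈ [−1, 1]. Then for all unit vectors u_1, …, u_m in ℝ^m, ∑_{i=1}^m ∑_{j=1}^m A_{ij} E(u_i · u_j) ≥ v · ∑_{i=1}^m ∑_{j=1}^m A_{ij} (u_i · u_j). -/
open scoped BigOperators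

theorem stmt15 (m : ℕ) (hm : 0 < m)
    (A : Matrix (Fin m) (Fin m) ℝ) (hsym : A.IsSymm)
    (hoff : ∀ i j, i ≠ j → A i j ≤ 0)
    (hcol : ∀ j, ∑ i, A i j = 0)
    (v : ℝ) (E : ℝ → ℝ) (hE1 : E 1 = 1)
    (hE : ∀ t ∈ Set.Icc (-1 : ℝ) 1, 1 - E t ≥ v * (1 - t))
    (u : Fin m → Fin m → ℝ) (hu : ∀ i, ∑ k, u i k ^ 2 = 1) :
    ∑ i, ∑ j, A i j * E (∑ k, u i k * u j k) ≥
      v * ∑ i, ∑ j, A i j * (∑ k, u i k * u j k) := by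
  -- t_ij ∈ [-1,1] by Cauchy-Schwarz
  have ht : ∀ i j, (∑ k, u i k * u j k) ∈ Set.Icc (-1 : ℝ) 1 := by
    intro i j
    have h1 : (∑ k, u i k * u j k) ^ 2 ≤ (∑ k, u i k ^ 2) * (∑ k, u j k ^ 2) := by
      have := Finset.sum_mul_sq_le_sq_mul_sq Finset.univ (u i) (u j)
      simpa [pow_two] using this
    rw [hu i, hu j, one_mul] at h1
    constructor
    · nlinarith [h1]
    · nlinarith [h1]
  have key : ∀ i j, A i j * ((E (∑ k, u i k * u j k) - 1)
      - v * ((∑ k, u i k * u j k) - 1)) ≥ 0 := by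
    intro i j
    by_cases hij : i = j
    · subst hij
      have : (∑ k, u i k * u i k) = 1 := by
        simpa [pow_two] using hu i
      rw [this, hE1]
      ring_nf
      simp
    · have h1 := hE _ (ht i j)
      have h2 := hoff i j hij
      nlinarith [h1, h2]
  have hzero : ∑ i, ∑ j, A i j * (1 - v) = 0 := by
    rw [Finset.sum_comm]
    simp [← Finset.sum_mul, hcol]
  have hsum : ∑ i, ∑ j, A i j * ((E (∑ k, u i k * u j k) - 1)
      - v * ((∑ k, u i k * u j k) - 1)) ≥ 0 :=
    Finset.sum_nonneg fun i _ => Finset.sum_nonneg fun j _ => key i j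
  have expand : ∑ i, ∑ j, A i j * ((E (∑ k, u i k * u j k) - 1)
      - v * ((∑ k, u i k * u j k) - 1))
      = (∑ i, ∑ j, A i j * E (∑ k, u i k * u j k))
        - v * (∑ i, ∑ j, A i j * (∑ k, u i k * u j k))
        - ∑ i, ∑ j, A i j * (1 - v) := by
    rw [Finset.mul_sum, ← Finset.sum_sub_distrib, ← Finset.sum_sub_distrib]
    refine Finset.sum_congr rfl fun i _ => ?_
    rw [Finset.mul_sum, ← Finset.sum_sub_distrib, ← Finset.sum_sub_distrib]
    refine Finset.sum_congr rfl fun j _ => ?_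
    ring
  rw [expand, hzero, sub_zero] at hsum
  linarith
end

section
/- For all positive integers n, γ(n) ≤ 1, and 1 − γ(n) = Θ(1/n): there exist positive real constants c₁ and c₂ such that for all positive integers n, c₁/n ≤ 1 − γ(n) ≤ c₂/n. -/
open Real Filter Topology

/-- Midpoint log-convexity of Γ. -/
lemma gamma_sq_mid {x : ℝ} (hx : 0 < x) :
    Real.Gamma (x + 1 / 2) ^ 2 ≤ Real.Gamma x * Real.Gamma (x + 1) := by
  have hx1 : (0 : ℝ) < x + 1 := by linarith
  have h := Real.convexOn_log_Gamma.2 (Set.mem_Ioi.mpr hx) (Set.mem_Ioi.mpr hx1)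
    (by norm_num : (0:ℝ) ≤ 1/2) (by norm_num : (0:ℝ) ≤ 1/2) (by norm_num)
  have e : (1/2 : ℝ) • x + (1/2 : ℝ) • (x + 1) = x + 1/2 := by
    simp [smul_eq_mul]; ring
  rw [e] at h
  simp only [Function.comp_apply, smul_eq_mul] at h
  have p1 : 0 < Real.Gamma (x + 1/2) := Real.Gamma_pos_of_pos (by linarith)
  have p2 : 0 < Real.Gamma x := Real.Gamma_pos_of_pos hx
  have p3 : 0 < Real.Gamma (x + 1) := Real.Gamma_pos_of_pos hx1
  have key : Real.log (Real.Gamma (x + 1/2) ^ 2) ≤ Real.log (Real.Gamma x * Real.Gamma (x + 1)) := by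
    rw [Real.log_pow, Real.log_mul p2.ne' p3.ne']
    push_cast
    linarith
  have := Real.exp_le_exp.mpr key
  rwa [Real.exp_log (by positivity), Real.exp_log (by positivity)] at this

lemma gam_le_one (n : ℕ) (hn : 0 < n) : gam n ≤ 1 := by
  have hn' : (0:ℝ) < n := by exact_mod_cast hn
  have hx : (0:ℝ) < (n:ℝ)/2 := by linarith
  have h := gamma_sq_mid hx
  rw [Real.Gamma_add_one hx.ne'] at h
  have e : ((n:ℝ)/2 + 1/2) = ((n:ℝ) + 1)/2 := by ring
  rw [e] at h
  have hΓ0 : 0 < Real.Gamma ((n:ℝ)/2) := Real.Gamma_pos_of_pos hx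
  rw [gam, div_pow, div_mul_div_comm, div_le_one (by positivity)]
  nlinarith [h, hΓ0]

lemma gam_ge (n : ℕ) (hn : 0 < n) : (n:ℝ)/((n:ℝ)+1) ≤ gam n := by
  have hn' : (0:ℝ) < n := by exact_mod_cast hn
  have hx : (0:ℝ) < (n:ℝ)/2 := by linarith
  have hy : (0:ℝ) < ((n:ℝ)+1)/2 := by linarith
  have h := gamma_sq_mid hy
  rw [Real.Gamma_add_one hy.ne'] at h
  have e : (((n:ℝ)+1)/2 + 1/2) = (n:ℝ)/2 + 1 := by ring
  rw [e, Real.Gamma_add_one hx.ne'] at h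
  -- h : ((n/2) * Γ(n/2))^2 ≤ Γ((n+1)/2) * (((n+1)/2) * Γ((n+1)/2))
  have hΓ0 : 0 < Real.Gamma ((n:ℝ)/2) := Real.Gamma_pos_of_pos hx
  have hΓ1 : 0 < Real.Gamma (((n:ℝ)+1)/2) := Real.Gamma_pos_of_pos hy
  rw [gam, div_pow, div_mul_div_comm, div_le_div_iff₀ (by linarith) (by positivity)]
  nlinarith [h, hΓ0, hΓ1, hn']

lemma gam_pos (n : ℕ) (hn : 0 < n) : 0 < gam n := by
  have hn' : (0:ℝ) < n := by exact_mod_cast hn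
  refine lt_of_lt_of_le ?_ (gam_ge n hn)
  positivity

lemma gam_rec (n : ℕ) (hn : 0 < n) : gam n * gam (n + 1) = (n:ℝ)/((n:ℝ)+1) := by
  have hn' : (0:ℝ) < n := by exact_mod_cast hn
  have hx : (0:ℝ) < (n:ℝ)/2 := by linarith
  have hy : (0:ℝ) < ((n:ℝ)+1)/2 := by linarith
  have hΓ0 : 0 < Real.Gamma ((n:ℝ)/2) := Real.Gamma_pos_of_pos hx
  have hΓ1 : 0 < Real.Gamma (((n:ℝ)+1)/2) := Real.Gamma_pos_of_pos hy
  have hΓ2 : Real.Gamma ((n:ℝ)/2 + 1) = (n:ℝ)/2 * Real.Gamma ((n:ℝ)/2) :=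
    Real.Gamma_add_one hx.ne'
  rw [gam, gam]
  push_cast
  have e : ((n:ℝ) + 1 + 1)/2 = (n:ℝ)/2 + 1 := by ring
  rw [e, hΓ2]
  field_simp

lemma gam_tendsto : Tendsto (fun n : ℕ => gam n) atTop (𝓝 1) := by
  have hlow : Tendsto (fun n : ℕ => (n:ℝ)/((n:ℝ)+1)) atTop (𝓝 1) := by
    have h0 := tendsto_one_div_add_atTop_nhds_zero_nat (𝕜 := ℝ)
    have := (tendsto_const_nhds (x := (1:ℝ)) (f := atTop)).sub h0
    simp only [sub_zero] at this
    refine this.congr (fun n => ?_)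
    have hn1 : (0:ℝ) < (n:ℝ) + 1 := by positivity
    field_simp
    ring
  refine tendsto_of_tendsto_of_tendsto_of_le_of_le' hlow tendsto_const_nhds ?_ ?_
  · filter_upwards [eventually_ge_atTop 1] with n hn
    exact gam_ge n hn
  · filter_upwards [eventually_ge_atTop 1] with n hn
    exact gam_le_one n hn

/-- auxiliary sequence -/
noncomputable def vseq (n : ℕ) : ℝ := gam n ^ 2 * (((n:ℝ) + 1) / (n:ℝ))

lemma vseq_tendsto : Tendsto vseq atTop (𝓝 1) := by
  have h1 : Tendsto (fun n : ℕ => gam n ^ 2) atTop (𝓝 1) := by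
    have := gam_tendsto.mul gam_tendsto
    simpa [pow_two] using this
  have h2 : Tendsto (fun n : ℕ => ((n:ℝ) + 1) / (n:ℝ)) atTop (𝓝 1) := by
    have h0 := tendsto_one_div_atTop_nhds_zero_nat (𝕜 := ℝ)
    have := (tendsto_const_nhds (x := (1:ℝ)) (f := atTop)).add h0
    simp only [add_zero] at this
    refine (this.congr' ?_)
    filter_upwards [eventually_ge_atTop 1] with n hn
    have hn' : (0:ℝ) < n := by exact_mod_cast hn
    field_simp
  have := h1.mul h2
  simp only [mul_one] at this; exact this

lemma gam_step (n : ℕ) (hn : 0 < n) :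
    gam (n + 2) = gam n * (((n:ℝ) + 1) ^ 2 / ((n:ℝ) * ((n:ℝ) + 2))) := by
  have hn' : (0:ℝ) < n := by exact_mod_cast hn
  have h1 := gam_rec n hn
  have h2 : gam (n + 1) * gam (n + 2) = ((n:ℝ) + 1)/((n:ℝ) + 2) := by
    have h2' := gam_rec (n + 1) (Nat.succ_pos n)
    push_cast at h2'
    have e0 : n + 1 + 1 = n + 2 := rfl
    rw [e0] at h2'
    convert h2' using 2
    ring
  have hg0 : gam n ≠ 0 := (gam_pos n hn).ne'
  have hg1 : gam (n + 1) ≠ 0 := (gam_pos (n + 1) (Nat.succ_pos n)).ne'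
  have e1 : gam (n + 1) = ((n:ℝ)/((n:ℝ)+1)) / gam n := by
    rw [eq_div_iff hg0, mul_comm]; exact h1
  have e2 : gam (n + 2) = (((n:ℝ)+1)/((n:ℝ)+2)) / gam (n + 1) := by
    rw [eq_div_iff hg1, mul_comm]; exact h2
  rw [e2, e1]
  field_simp

lemma vseq_step (n : ℕ) (hn : 0 < n) : vseq n ≤ vseq (n + 2) := by
  have hn' : (0:ℝ) < n := by exact_mod_cast hn
  have h : vseq (n + 2) = vseq n *
      ((((n:ℝ) + 1) ^ 3 * ((n:ℝ) + 3)) / ((n:ℝ) * ((n:ℝ) + 2) ^ 3)) := by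
    rw [vseq, vseq, gam_step n hn]
    push_cast
    field_simp
    ring
  rw [h]
  have hv : 0 ≤ vseq n := by
    have := gam_pos n hn
    rw [vseq]; positivity
  refine le_mul_of_one_le_right hv ?_
  rw [le_div_iff₀ (by positivity)]
  nlinarith [hn']

lemma vseq_le_one (n : ℕ) (hn : 0 < n) : vseq n ≤ 1 := by
  have hmono : ∀ k : ℕ, vseq n ≤ vseq (n + 2 * k) := by
    intro k
    induction k with
    | zero => simp
    | succ m ih =>
      have : n + 2 * (m + 1) = (n + 2 * m) + 2 := by ring
      rw [this]
      exact ih.trans (vseq_step (n + 2 * m) (by omega))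
  have hsm : StrictMono (fun k : ℕ => n + 2 * k) := fun a b h => by dsimp; omega
  have htend : Tendsto (fun k : ℕ => vseq (n + 2 * k)) atTop (𝓝 1) :=
    vseq_tendsto.comp hsm.tendsto_atTop
  exact ge_of_tendsto htend (Filter.Eventually.of_forall hmono)

lemma gam_sq_le (n : ℕ) (hn : 0 < n) : gam n ^ 2 ≤ (n:ℝ)/((n:ℝ)+1) := by
  have hn' : (0:ℝ) < n := by exact_mod_cast hn
  have hn1 : (0:ℝ) < (n:ℝ) + 1 := by linarith
  have h := vseq_le_one n hn
  rw [vseq] at h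
  have h2 := mul_le_mul_of_nonneg_right h hn'.le
  have e : gam n ^ 2 * (((n:ℝ)+1)/(n:ℝ)) * (n:ℝ) = gam n ^ 2 * ((n:ℝ)+1) := by
    field_simp
  rw [e, one_mul] at h2
  rw [le_div_iff₀ hn1]
  exact h2

theorem stmt16 :
    (∀ n : ℕ, 0 < n → gam n ≤ 1) ∧
      ∃ c₁ c₂ : ℝ, 0 < c₁ ∧ 0 < c₂ ∧
        ∀ n : ℕ, 0 < n → c₁ / n ≤ 1 - gam n ∧ 1 - gam n ≤ c₂ / n := by
  refine ⟨gam_le_one, 1/4, 1, by norm_num, one_pos, fun n hn => ⟨?_, ?_⟩⟩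
  · -- lower bound
    have hn' : (1:ℝ) ≤ n := by exact_mod_cast hn
    have hm : (0:ℝ) < n := by linarith
    have gsq := gam_sq_le n hn
    have hc : (n:ℝ)/((n:ℝ)+1) ≤ ((4*(n:ℝ)-1)/(4*(n:ℝ)))^2 := by
      rw [div_pow, div_le_div_iff₀ (by linarith) (by positivity)]
      nlinarith [hn']
    have hgle : gam n ≤ (4*(n:ℝ)-1)/(4*(n:ℝ)) := by
      refine le_of_pow_le_pow_left₀ two_ne_zero (div_nonneg (by linarith) (by positivity)) ?_
      exact gsq.trans hc
    have e : (1:ℝ) - (4*(n:ℝ)-1)/(4*(n:ℝ)) = 1/4/(n:ℝ) := by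
      field_simp
      ring
    have : (1:ℝ)/4/(n:ℝ) ≤ 1 - gam n := by linarith
    exact this
  · -- upper bound
    have hn' : (1:ℝ) ≤ n := by exact_mod_cast hn
    have hm : (0:ℝ) < n := by linarith
    have h := gam_ge n hn
    have e : (1:ℝ) - (n:ℝ)/((n:ℝ)+1) = 1/((n:ℝ)+1) := by
      field_simp
      ring
    have h2 : (1:ℝ)/((n:ℝ)+1) ≤ 1/(n:ℝ) := by
      apply one_div_le_one_div_of_le hm
      linarith
    have : 1 - gam n ≤ 1/(n:ℝ) := by linarith
    simpa using this
end
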